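/- arXiv:1303.6263 — 5 statements merged into one kernel-verified Lean document; each statement's English description precedes it below -/
import Mathlib

section
/- Let L be a pseudo-Finsler metric on a conic domain A over the open set Ω ⊆ ℝⁿ, and let V be an L-admissible smooth vector field on Ω. Then there exists exactly one connection datum Γ : Ω → (bilinear maps ℝⁿ × ℝⁿ → ℝⁿ) that is torsion-free and almost g-compatible with reference V; moreover, this Γ is smooth. -/
noncomputable section

open scoped Topology

/-- Vectors in `ℝⁿ`. -/
abbrev Vec (n : ℕ) := Fin n → ℝ

/-- Continuous bilinear maps `ℝⁿ × ℝⁿ → ℝⁿ` (as iterated continuous linear maps). -/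
abbrev Bil (n : ℕ) := Vec n →L[ℝ] Vec n →L[ℝ] Vec n

/-- The fundamental tensor of `L`:
`g_{(x,v)}(u,w) = ½ ∂²/∂t∂s L(x, v + t u + s w)|₀`. -/
def gF {n : ℕ} (L : Vec n × Vec n → ℝ) (x v u w : Vec n) : ℝ :=
  (1 / 2) * deriv (fun t : ℝ => deriv (fun s : ℝ => L (x, v + t • u + s • w)) 0) 0

/-- The Cartan tensor of `L`:
`C_{(x,v)}(w₁,w₂,w₃) = ¼ ∂³/∂s₁∂s₂∂s₃ L(x, v + s₁w₁ + s₂w₂ + s₃w₃)|₀`. -/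
def CartanF {n : ℕ} (L : Vec n × Vec n → ℝ) (x v w₁ w₂ w₃ : Vec n) : ℝ :=
  (1 / 4) * deriv (fun s₁ : ℝ => deriv (fun s₂ : ℝ => deriv (fun s₃ : ℝ =>
    L (x, v + s₁ • w₁ + s₂ • w₂ + s₃ • w₃)) 0) 0) 0

/-- `L` is a pseudo-Finsler metric on the conic domain `A ⊆ Ω × (ℝⁿ \ {0})`. -/
structure IsPseudoFinsler {n : ℕ} (Ω : Set (Vec n)) (A : Set (Vec n × Vec n))
    (L : Vec n × Vec n → ℝ) : Prop where
  isOpen_base : IsOpen Ω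
  isOpen_dom : IsOpen A
  dom_subset : ∀ p ∈ A, p.1 ∈ Ω ∧ p.2 ≠ 0
  conic : ∀ p ∈ A, ∀ lam : ℝ, 0 < lam → (p.1, lam • p.2) ∈ A
  smooth : ContDiffOn ℝ (⊤ : ℕ∞) L A
  homogeneous : ∀ p ∈ A, ∀ lam : ℝ, 0 < lam → L (p.1, lam • p.2) = lam ^ 2 * L p
  g_symm : ∀ p ∈ A, ∀ u w, gF L p.1 p.2 u w = gF L p.1 p.2 w u
  g_add_left : ∀ p ∈ A, ∀ u₁ u₂ w,
    gF L p.1 p.2 (u₁ + u₂) w = gF L p.1 p.2 u₁ w + gF L p.1 p.2 u₂ w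
  g_smul_left : ∀ p ∈ A, ∀ (c : ℝ) u w, gF L p.1 p.2 (c • u) w = c * gF L p.1 p.2 u w
  g_nondeg : ∀ p ∈ A, ∀ u, (∀ w, gF L p.1 p.2 u w = 0) → u = 0

/-- The affine connection associated to a connection datum `Γ`:
`(∇_X Y)(x) = (dY)_x(X(x)) + Γ(x)(X(x), Y(x))`. -/
def nablaVF {n : ℕ} (Γ : Vec n → Bil n) (X Y : Vec n → Vec n) (x : Vec n) : Vec n :=
  fderiv ℝ Y x (X x) + Γ x (X x) (Y x)

/-- A connection datum is torsion-free on `Ω` if its values are symmetric bilinear maps. -/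
def TorsionFree {n : ℕ} (Ω : Set (Vec n)) (Γ : Vec n → Bil n) : Prop :=
  ∀ x ∈ Ω, ∀ u w, Γ x u w = Γ x w u

/-- A vector field `V` on `Ω` is `L`-admissible if it is smooth and takes values in `A`. -/
def LAdmissible {n : ℕ} (A : Set (Vec n × Vec n)) (Ω : Set (Vec n))
    (V : Vec n → Vec n) : Prop :=
  ContDiffOn ℝ (⊤ : ℕ∞) V Ω ∧ ∀ x ∈ Ω, (x, V x) ∈ A

/-- A connection datum `Γ` on `Ω` is almost `g`-compatible with reference `V`:
`X(g_V(Y,Z)) = g_V(∇_X Y, Z) + g_V(Y, ∇_X Z) + 2 C_V(∇_X V, Y, Z)`. -/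
def AlmostGCompatible {n : ℕ} (L : Vec n × Vec n → ℝ) (Ω : Set (Vec n))
    (Γ : Vec n → Bil n) (V : Vec n → Vec n) : Prop :=
  ∀ X Y Z : Vec n → Vec n,
    ContDiffOn ℝ (⊤ : ℕ∞) X Ω → ContDiffOn ℝ (⊤ : ℕ∞) Y Ω → ContDiffOn ℝ (⊤ : ℕ∞) Z Ω →
    ∀ x ∈ Ω,
      fderiv ℝ (fun y => gF L y (V y) (Y y) (Z y)) x (X x) =
        gF L x (V x) (nablaVF Γ X Y x) (Z x) + gF L x (V x) (Y x) (nablaVF Γ X Z x)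
          + 2 * CartanF L x (V x) (nablaVF Γ X V x) (Y x) (Z x)

/-- Lie bracket of vector fields: `[X,Y](x) = (dY)_x(X(x)) − (dX)_x(Y(x))`. -/
def lieVF {n : ℕ} (X Y : Vec n → Vec n) (x : Vec n) : Vec n :=
  fderiv ℝ Y x (X x) - fderiv ℝ X x (Y x)

/-- Curvature tensor of a connection datum:
`R(X,Y)Z = ∇_X∇_Y Z − ∇_Y∇_X Z − ∇_{[X,Y]}Z`. -/
def curvVF {n : ℕ} (Γ : Vec n → Bil n) (X Y Z : Vec n → Vec n) (x : Vec n) : Vec n :=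
  nablaVF Γ X (nablaVF Γ Y Z) x - nablaVF Γ Y (nablaVF Γ X Z) x
    - nablaVF Γ (lieVF X Y) Z x

/-- Covariant derivative of the Cartan tensor:
`(∇^V_X C_V)(Y,Z,W)(x)`. -/
def nablaCartan {n : ℕ} (L : Vec n × Vec n → ℝ) (Γ : Vec n → Bil n)
    (V X Y Z W : Vec n → Vec n) (x : Vec n) : ℝ :=
  fderiv ℝ (fun y => CartanF L y (V y) (Y y) (Z y) (W y)) x (X x)
    - CartanF L x (V x) (nablaVF Γ X Y x) (Z x) (W x)
    - CartanF L x (V x) (Y x) (nablaVF Γ X Z x) (W x)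
    - CartanF L x (V x) (Y x) (Z x) (nablaVF Γ X W x)

/-- The tensor
`B^V(X,Y,Z,W) = (∇^V_Y C_V)(∇_X V, Z, W) − (∇^V_X C_V)(∇_Y V, Z, W) + C_V(R^V(Y,X)V, Z, W)`. -/
def BTensor {n : ℕ} (L : Vec n × Vec n → ℝ) (Γ : Vec n → Bil n)
    (V X Y Z W : Vec n → Vec n) (x : Vec n) : ℝ :=
  nablaCartan L Γ V Y (nablaVF Γ X V) Z W x - nablaCartan L Γ V X (nablaVF Γ Y V) Z W x
    + CartanF L x (V x) (curvVF Γ Y X V x) (Z x) (W x)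

/-- A Chern connection of `(L, A)`: a smooth family of symmetric bilinear maps on `A` which,
for every open `U` and every `L`-admissible smooth vector field `V` on `U`, yields a
torsion-free, almost `g`-compatible connection datum `x ↦ Γ(x, V(x))`. -/
def IsChernConnection {n : ℕ} (L : Vec n × Vec n → ℝ) (A : Set (Vec n × Vec n))
    (Γc : Vec n × Vec n → Bil n) : Prop :=
  ContDiffOn ℝ (⊤ : ℕ∞) Γc A ∧
  (∀ p ∈ A, ∀ u w, Γc p u w = Γc p w u) ∧
  ∀ U : Set (Vec n), IsOpen U → ∀ V : Vec n → Vec n, ContDiffOn ℝ (⊤ : ℕ∞) V U →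
    (∀ x ∈ U, (x, V x) ∈ A) →
    AlmostGCompatible L U (fun x => Γc (x, V x)) V

/-- Covariant derivative along a curve `γ` with reference `W`:
`(D^W_γ X)(t) = X'(t) + Γ(γ(t), W(t))(γ'(t), X(t))`. -/
def covDer {n : ℕ} (Γc : Vec n × Vec n → Bil n) (γ W X : ℝ → Vec n) (t : ℝ) : Vec n :=
  deriv X t + Γc (γ t, W t) (deriv γ t) (X t)

/-- Contracted hh-curvature `R_{(p,v)}(v,u)w` of the Chern connection. -/
def hhCurv {n : ℕ} (Γc : Vec n × Vec n → Bil n) (p v u w : Vec n) : Vec n :=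
  fderiv ℝ Γc (p, v) (u, 0) v w - fderiv ℝ Γc (p, v) (w, 0) v u
    - fderiv ℝ Γc (p, v) (0, Γc (p, v) v u) v w
    + fderiv ℝ Γc (p, v) (0, Γc (p, v) v w) v u
    + Γc (p, v) u (Γc (p, v) v w) - Γc (p, v) w (Γc (p, v) v u)

/-- Covariant derivative along the `t`-parameter curves of a two-parameter map `Λ`,
with reference vector `∂Λ/∂t`. -/
def DtOp {n : ℕ} (Γc : Vec n × Vec n → Bil n) (Λ X : ℝ × ℝ → Vec n) (p : ℝ × ℝ) : Vec n :=
  deriv (fun t => X (t, p.2)) p.1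
    + Γc (Λ p, deriv (fun t => Λ (t, p.2)) p.1) (deriv (fun t => Λ (t, p.2)) p.1) (X p)

/-- Covariant derivative along the `s`-parameter curves of a two-parameter map `Λ`,
with reference vector `∂Λ/∂t`. -/
def DsOp {n : ℕ} (Γc : Vec n × Vec n → Bil n) (Λ X : ℝ × ℝ → Vec n) (p : ℝ × ℝ) : Vec n :=
  deriv (fun s => X (p.1, s)) p.2
    + Γc (Λ p, deriv (fun t => Λ (t, p.2)) p.1) (deriv (fun s => Λ (p.1, s)) p.2) (X p)
namespace ChernAux

open ContinuousLinearMap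

set_option synthInstance.maxHeartbeats 400000

variable {n : ℕ}

scoped instance instNACG_T1 : NormedAddCommGroup ((Vec n × Vec n) →L[ℝ] ℝ) :=
  ContinuousLinearMap.toNormedAddCommGroup (𝕜 := ℝ) (𝕜₂ := ℝ) (E := Vec n × Vec n)
    (F := ℝ) (σ₁₂ := RingHom.id ℝ)

scoped instance instNS_T1 : NormedSpace ℝ ((Vec n × Vec n) →L[ℝ] ℝ) :=
  ContinuousLinearMap.toNormedSpace (𝕜 := ℝ) (𝕜₂ := ℝ) (E := Vec n × Vec n)
    (F := ℝ) (σ₁₂ := RingHom.id ℝ)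

scoped instance instNACG_T2 : NormedAddCommGroup ((Vec n × Vec n) →L[ℝ] (Vec n × Vec n) →L[ℝ] ℝ) :=
  ContinuousLinearMap.toNormedAddCommGroup (𝕜 := ℝ) (𝕜₂ := ℝ) (E := Vec n × Vec n)
    (F := (Vec n × Vec n) →L[ℝ] ℝ) (σ₁₂ := RingHom.id ℝ)

scoped instance instNS_T2 : NormedSpace ℝ ((Vec n × Vec n) →L[ℝ] (Vec n × Vec n) →L[ℝ] ℝ) :=
  ContinuousLinearMap.toNormedSpace (𝕜 := ℝ) (𝕜₂ := ℝ) (E := Vec n × Vec n)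
    (F := (Vec n × Vec n) →L[ℝ] ℝ) (σ₁₂ := RingHom.id ℝ)

scoped instance instNACG_VV : NormedAddCommGroup (Vec n →L[ℝ] Vec n) :=
  ContinuousLinearMap.toNormedAddCommGroup (𝕜 := ℝ) (𝕜₂ := ℝ) (E := Vec n) (F := Vec n)
    (σ₁₂ := RingHom.id ℝ)

scoped instance instNS_VV : NormedSpace ℝ (Vec n →L[ℝ] Vec n) :=
  ContinuousLinearMap.toNormedSpace (𝕜 := ℝ) (𝕜₂ := ℝ) (E := Vec n) (F := Vec n)
    (σ₁₂ := RingHom.id ℝ)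

scoped instance instNACG_Bil : NormedAddCommGroup (Bil n) :=
  ContinuousLinearMap.toNormedAddCommGroup (𝕜 := ℝ) (𝕜₂ := ℝ) (E := Vec n)
    (F := Vec n →L[ℝ] Vec n) (σ₁₂ := RingHom.id ℝ)

scoped instance instNS_Bil : NormedSpace ℝ (Bil n) :=
  ContinuousLinearMap.toNormedSpace (𝕜 := ℝ) (𝕜₂ := ℝ) (E := Vec n)
    (F := Vec n →L[ℝ] Vec n) (σ₁₂ := RingHom.id ℝ)

scoped instance instNACG_T3 : NormedAddCommGroup
    ((Vec n × Vec n) →L[ℝ] (Vec n × Vec n) →L[ℝ] (Vec n × Vec n) →L[ℝ] ℝ) :=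
  ContinuousLinearMap.toNormedAddCommGroup (𝕜 := ℝ) (𝕜₂ := ℝ) (E := Vec n × Vec n)
    (F := (Vec n × Vec n) →L[ℝ] (Vec n × Vec n) →L[ℝ] ℝ) (σ₁₂ := RingHom.id ℝ)

scoped instance instNS_T3 : NormedSpace ℝ
    ((Vec n × Vec n) →L[ℝ] (Vec n × Vec n) →L[ℝ] (Vec n × Vec n) →L[ℝ] ℝ) :=
  ContinuousLinearMap.toNormedSpace (𝕜 := ℝ) (𝕜₂ := ℝ) (E := Vec n × Vec n)
    (F := (Vec n × Vec n) →L[ℝ] (Vec n × Vec n) →L[ℝ] ℝ) (σ₁₂ := RingHom.id ℝ)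

scoped instance instNACG_T2R : NormedAddCommGroup
    (((Vec n × Vec n) →L[ℝ] (Vec n × Vec n) →L[ℝ] ℝ) →L[ℝ] ℝ) :=
  ContinuousLinearMap.toNormedAddCommGroup (𝕜 := ℝ) (𝕜₂ := ℝ)
    (E := (Vec n × Vec n) →L[ℝ] (Vec n × Vec n) →L[ℝ] ℝ) (F := ℝ) (σ₁₂ := RingHom.id ℝ)

scoped instance instNS_T2R : NormedSpace ℝ
    (((Vec n × Vec n) →L[ℝ] (Vec n × Vec n) →L[ℝ] ℝ) →L[ℝ] ℝ) :=
  ContinuousLinearMap.toNormedSpace (𝕜 := ℝ) (𝕜₂ := ℝ)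
    (E := (Vec n × Vec n) →L[ℝ] (Vec n × Vec n) →L[ℝ] ℝ) (F := ℝ) (σ₁₂ := RingHom.id ℝ)

scoped instance instNACG_T2T1 : NormedAddCommGroup
    (((Vec n × Vec n) →L[ℝ] (Vec n × Vec n) →L[ℝ] ℝ) →L[ℝ] ((Vec n × Vec n) →L[ℝ] ℝ)) :=
  ContinuousLinearMap.toNormedAddCommGroup (𝕜 := ℝ) (𝕜₂ := ℝ)
    (E := (Vec n × Vec n) →L[ℝ] (Vec n × Vec n) →L[ℝ] ℝ) (F := (Vec n × Vec n) →L[ℝ] ℝ)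
    (σ₁₂ := RingHom.id ℝ)

scoped instance instNS_T2T1 : NormedSpace ℝ
    (((Vec n × Vec n) →L[ℝ] (Vec n × Vec n) →L[ℝ] ℝ) →L[ℝ] ((Vec n × Vec n) →L[ℝ] ℝ)) :=
  ContinuousLinearMap.toNormedSpace (𝕜 := ℝ) (𝕜₂ := ℝ)
    (E := (Vec n × Vec n) →L[ℝ] (Vec n × Vec n) →L[ℝ] ℝ) (F := (Vec n × Vec n) →L[ℝ] ℝ)
    (σ₁₂ := RingHom.id ℝ)

scoped instance instNACG_VB : NormedAddCommGroup (Vec n →L[ℝ] Bil n) :=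
  ContinuousLinearMap.toNormedAddCommGroup (𝕜 := ℝ) (𝕜₂ := ℝ) (E := Vec n) (F := Bil n)
    (σ₁₂ := RingHom.id ℝ)

scoped instance instNS_VB : NormedSpace ℝ (Vec n →L[ℝ] Bil n) :=
  ContinuousLinearMap.toNormedSpace (𝕜 := ℝ) (𝕜₂ := ℝ) (E := Vec n) (F := Bil n)
    (σ₁₂ := RingHom.id ℝ)

/-- First total derivative of `L`. -/
def M1 (L : Vec n × Vec n → ℝ) : (Vec n × Vec n) → (Vec n × Vec n) →L[ℝ] ℝ := fderiv ℝ L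

/-- Second total derivative of `L`. -/
def M2 (L : Vec n × Vec n → ℝ) := fderiv ℝ (M1 L)

/-- Third total derivative of `L`. -/
def M3 (L : Vec n × Vec n → ℝ) := fderiv ℝ (M2 L)

/-- Fundamental tensor expressed through `M2`. -/
def gB (L : Vec n × Vec n → ℝ) (p : Vec n × Vec n) (u w : Vec n) : ℝ :=
  (1/2) * M2 L p ((0 : Vec n), u) ((0 : Vec n), w)

/-- Cartan tensor expressed through `M3`. -/
def CB (L : Vec n × Vec n → ℝ) (p : Vec n × Vec n) (u w z : Vec n) : ℝ :=
  (1/4) * M3 L p ((0 : Vec n), u) ((0 : Vec n), w) ((0 : Vec n), z)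

/-- Base-derivative of the fundamental tensor. -/
def SB (L : Vec n × Vec n → ℝ) (p : Vec n × Vec n) (u w z : Vec n) : ℝ :=
  (1/2) * M3 L p (u, (0 : Vec n)) ((0 : Vec n), w) ((0 : Vec n), z)

section Analytic

variable {Ω : Set (Vec n)} {A : Set (Vec n × Vec n)} {L : Vec n × Vec n → ℝ}

theorem cM1 (hL : IsPseudoFinsler Ω A L) : ContDiffOn ℝ (⊤ : ℕ∞) (M1 L) A :=
  hL.smooth.fderiv_of_isOpen hL.isOpen_dom (by simp)

theorem cM2 (hL : IsPseudoFinsler Ω A L) : ContDiffOn ℝ (⊤ : ℕ∞) (M2 L) A :=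
  (cM1 hL).fderiv_of_isOpen hL.isOpen_dom (by simp)

theorem cM3 (hL : IsPseudoFinsler Ω A L) : ContDiffOn ℝ (⊤ : ℕ∞) (M3 L) A :=
  (cM2 hL).fderiv_of_isOpen hL.isOpen_dom (by simp)

theorem hasM1 (hL : IsPseudoFinsler Ω A L) {p : Vec n × Vec n} (hp : p ∈ A) :
    HasFDerivAt L (M1 L p) p :=
  ((hL.smooth.contDiffAt (hL.isOpen_dom.mem_nhds hp)).differentiableAt (by simp)).hasFDerivAt

theorem hasM2 (hL : IsPseudoFinsler Ω A L) {p : Vec n × Vec n} (hp : p ∈ A) :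
    HasFDerivAt (M1 L) (M2 L p) p :=
  (((cM1 hL).contDiffAt (hL.isOpen_dom.mem_nhds hp)).differentiableAt (by simp)).hasFDerivAt

theorem hasM3 (hL : IsPseudoFinsler Ω A L) {p : Vec n × Vec n} (hp : p ∈ A) :
    HasFDerivAt (M2 L) (M3 L p) p :=
  (((cM2 hL).contDiffAt (hL.isOpen_dom.mem_nhds hp)).differentiableAt (by simp)).hasFDerivAt

theorem deriv1 (hL : IsPseudoFinsler Ω A L) {x y : Vec n} (hq : (x, y) ∈ A) (w : Vec n) :
    deriv (fun s : ℝ => L (x, y + s • w)) 0 = M1 L (x, y) ((0 : Vec n), w) := by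
  have h1 : HasDerivAt (fun s : ℝ => y + s • w) w 0 := by
    simpa using ((hasDerivAt_id (0 : ℝ)).smul_const w).const_add y
  have hc : HasDerivAt (fun s : ℝ => ((x, y + s • w) : Vec n × Vec n)) (((0 : Vec n), w)) 0 :=
    (hasDerivAt_const (0 : ℝ) x).prodMk h1
  have hL' : HasFDerivAt L (M1 L (x, y)) ((fun s : ℝ => ((x, y + s • w) : Vec n × Vec n)) 0) := by
    simpa using hasM1 hL hq
  simpa [Function.comp_def] using (hL'.comp_hasDerivAt 0 hc).deriv

theorem deriv2 (hL : IsPseudoFinsler Ω A L) {x y : Vec n} (hq : (x, y) ∈ A) (b c : Vec n) :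
    deriv (fun t : ℝ => deriv (fun s : ℝ => L (x, y + t • b + s • c)) 0) 0
      = M2 L (x, y) ((0 : Vec n), b) ((0 : Vec n), c) := by
  have hev : ∀ᶠ t : ℝ in nhds 0, ((x, y + t • b) : Vec n × Vec n) ∈ A := by
    have hcont : ContinuousAt (fun t : ℝ => ((x, y + t • b) : Vec n × Vec n)) 0 := by fun_prop
    have hmem : A ∈ nhds ((fun t : ℝ => ((x, y + t • b) : Vec n × Vec n)) 0) := by
      simpa using hL.isOpen_dom.mem_nhds hq
    exact hcont.eventually_mem hmem
  have heq : (fun t : ℝ => deriv (fun s : ℝ => L (x, y + t • b + s • c)) 0)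
      =ᶠ[nhds (0 : ℝ)] fun t => M1 L (x, y + t • b) ((0 : Vec n), c) := by
    filter_upwards [hev] with t ht
    exact deriv1 hL ht c
  rw [heq.deriv_eq]
  have h1 : HasDerivAt (fun t : ℝ => y + t • b) b 0 := by
    simpa using ((hasDerivAt_id (0 : ℝ)).smul_const b).const_add y
  have hc2 : HasDerivAt (fun t : ℝ => ((x, y + t • b) : Vec n × Vec n)) (((0 : Vec n), b)) 0 :=
    (hasDerivAt_const (0 : ℝ) x).prodMk h1
  have hM : HasFDerivAt (M1 L) (M2 L (x, y)) ((fun t : ℝ => ((x, y + t • b) : Vec n × Vec n)) 0) := by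
    simpa using hasM2 hL hq
  have hcomp : HasDerivAt (fun t : ℝ => M1 L (x, y + t • b)) (M2 L (x, y) ((0 : Vec n), b)) 0 := by
    simpa [Function.comp_def] using hM.comp_hasDerivAt 0 hc2
  simpa using (hcomp.clm_apply (hasDerivAt_const (0 : ℝ) (((0 : Vec n), c) : Vec n × Vec n))).deriv

theorem deriv3 (hL : IsPseudoFinsler Ω A L) {x y : Vec n} (hq : (x, y) ∈ A) (a b c : Vec n) :
    deriv (fun r : ℝ => deriv (fun t : ℝ => deriv (fun s : ℝ =>
        L (x, y + r • a + t • b + s • c)) 0) 0) 0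
      = M3 L (x, y) ((0 : Vec n), a) ((0 : Vec n), b) ((0 : Vec n), c) := by
  have hev : ∀ᶠ r : ℝ in nhds 0, ((x, y + r • a) : Vec n × Vec n) ∈ A := by
    have hcont : ContinuousAt (fun r : ℝ => ((x, y + r • a) : Vec n × Vec n)) 0 := by fun_prop
    have hmem : A ∈ nhds ((fun r : ℝ => ((x, y + r • a) : Vec n × Vec n)) 0) := by
      simpa using hL.isOpen_dom.mem_nhds hq
    exact hcont.eventually_mem hmem
  have heq : (fun r : ℝ => deriv (fun t : ℝ => deriv (fun s : ℝ =>
        L (x, y + r • a + t • b + s • c)) 0) 0)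
      =ᶠ[nhds (0 : ℝ)] fun r => M2 L (x, y + r • a) ((0 : Vec n), b) ((0 : Vec n), c) := by
    filter_upwards [hev] with r hr
    exact deriv2 hL hr b c
  rw [heq.deriv_eq]
  have h1 : HasDerivAt (fun r : ℝ => y + r • a) a 0 := by
    simpa using ((hasDerivAt_id (0 : ℝ)).smul_const a).const_add y
  have hc2 : HasDerivAt (fun r : ℝ => ((x, y + r • a) : Vec n × Vec n)) (((0 : Vec n), a)) 0 :=
    (hasDerivAt_const (0 : ℝ) x).prodMk h1
  have hM : HasFDerivAt (M2 L) (M3 L (x, y)) ((fun r : ℝ => ((x, y + r • a) : Vec n × Vec n)) 0) := by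
    simpa using hasM3 hL hq
  have hcomp : HasDerivAt (fun r : ℝ => M2 L (x, y + r • a)) (M3 L (x, y) ((0 : Vec n), a)) 0 := by
    simpa [Function.comp_def] using hM.comp_hasDerivAt 0 hc2
  have h4 := hcomp.clm_apply (hasDerivAt_const (0 : ℝ) (((0 : Vec n), b) : Vec n × Vec n))
  have h5 := h4.clm_apply (hasDerivAt_const (0 : ℝ) (((0 : Vec n), c) : Vec n × Vec n))
  simpa using h5.deriv

theorem gF_eq (hL : IsPseudoFinsler Ω A L) {x v : Vec n} (hp : (x, v) ∈ A) (u w : Vec n) :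
    gF L x v u w = gB L (x, v) u w := by
  unfold gF gB
  rw [deriv2 hL hp u w]

theorem CartanF_eq (hL : IsPseudoFinsler Ω A L) {x v : Vec n} (hp : (x, v) ∈ A) (a b c : Vec n) :
    CartanF L x v a b c = CB L (x, v) a b c := by
  unfold CartanF CB
  rw [deriv3 hL hp a b c]

end Analytic

end ChernAux
namespace ChernAux

open ContinuousLinearMap

variable {n : ℕ}

section Symm

variable {Ω : Set (Vec n)} {A : Set (Vec n × Vec n)} {L : Vec n × Vec n → ℝ}

theorem symm2 (hL : IsPseudoFinsler Ω A L) {p : Vec n × Vec n} (hp : p ∈ A)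
    (h k : Vec n × Vec n) : M2 L p h k = M2 L p k h := by
  apply second_derivative_symmetric_of_eventually (f := L) (f' := M1 L) ?_ (hasM2 hL hp)
  filter_upwards [hL.isOpen_dom.mem_nhds hp] with q hq using hasM1 hL hq

theorem symm3_23 (hL : IsPseudoFinsler Ω A L) {p : Vec n × Vec n} (hp : p ∈ A)
    (a h k : Vec n × Vec n) : M3 L p a h k = M3 L p a k h := by
  let ev1 : ((Vec n × Vec n) →L[ℝ] (Vec n × Vec n) →L[ℝ] ℝ) →L[ℝ] ℝ :=
    (ContinuousLinearMap.apply ℝ ℝ k).comp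
      (ContinuousLinearMap.apply ℝ ((Vec n × Vec n) →L[ℝ] ℝ) h)
  let ev2 : ((Vec n × Vec n) →L[ℝ] (Vec n × Vec n) →L[ℝ] ℝ) →L[ℝ] ℝ :=
    (ContinuousLinearMap.apply ℝ ℝ h).comp
      (ContinuousLinearMap.apply ℝ ((Vec n × Vec n) →L[ℝ] ℝ) k)
  have h1 : HasFDerivAt (fun q => M2 L q h k) (ev1.comp (M3 L p)) p := by
    exact ev1.hasFDerivAt.comp p (hasM3 hL hp)
  have h2 : HasFDerivAt (fun q => M2 L q k h) (ev2.comp (M3 L p)) p := by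
    exact ev2.hasFDerivAt.comp p (hasM3 hL hp)
  have heq : (fun q => M2 L q h k) =ᶠ[nhds p] fun q => M2 L q k h := by
    filter_upwards [hL.isOpen_dom.mem_nhds hp] with q hq using symm2 hL hq h k
  have h2' : HasFDerivAt (fun q => M2 L q h k) (ev2.comp (M3 L p)) p :=
    h2.congr_of_eventuallyEq heq
  have := h1.unique h2'
  calc M3 L p a h k = (ev1.comp (M3 L p)) a := rfl
    _ = (ev2.comp (M3 L p)) a := by rw [this]
    _ = M3 L p a k h := rfl

set_option maxHeartbeats 1000000 in
theorem symm3_12 (hL : IsPseudoFinsler Ω A L) {p : Vec n × Vec n} (hp : p ∈ A)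
    (a b c : Vec n × Vec n) : M3 L p a b c = M3 L p b a c := by
  let evc : ((Vec n × Vec n) →L[ℝ] ℝ) →L[ℝ] ℝ := ContinuousLinearMap.apply ℝ ℝ c
  let Lam : ((Vec n × Vec n) →L[ℝ] (Vec n × Vec n) →L[ℝ] ℝ) →L[ℝ]
      ((Vec n × Vec n) →L[ℝ] ℝ) :=
    (ContinuousLinearMap.compL ℝ (Vec n × Vec n) ((Vec n × Vec n) →L[ℝ] ℝ) ℝ) evc
  have h1 : ∀ᶠ q in nhds p, HasFDerivAt (fun q => M1 L q c) (Lam (M2 L q)) q := by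
    filter_upwards [hL.isOpen_dom.mem_nhds hp] with q hq
    have := evc.hasFDerivAt.comp q (hasM2 hL hq)
    simpa [Function.comp_def, Lam, evc] using this
  have h2 : HasFDerivAt (fun q => Lam (M2 L q)) (Lam.comp (M3 L p)) p := by
    have := Lam.hasFDerivAt.comp p (hasM3 hL hp)
    simpa [Function.comp_def] using this
  have key := second_derivative_symmetric_of_eventually h1 h2 a b
  simpa [Lam, evc] using key

end Symm

section Euler

variable {Ω : Set (Vec n)} {A : Set (Vec n × Vec n)} {L : Vec n × Vec n → ℝ}

theorem euler1 (hL : IsPseudoFinsler Ω A L) {p : Vec n × Vec n} (hp : p ∈ A) :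
    M1 L p ((0 : Vec n), p.2) = 2 * L p := by
  obtain ⟨x, v⟩ := p
  have hc : HasDerivAt (fun lam : ℝ => ((x, lam • v) : Vec n × Vec n)) (((0 : Vec n), v)) 1 := by
    have h1 : HasDerivAt (fun lam : ℝ => lam • v) v 1 := by
      simpa using (hasDerivAt_id (1 : ℝ)).smul_const v
    exact (hasDerivAt_const (1 : ℝ) x).prodMk h1
  have hL1 : HasFDerivAt L (M1 L (x, v)) ((fun lam : ℝ => ((x, lam • v) : Vec n × Vec n)) 1) := by
    simpa using hasM1 hL hp
  have hcurve : HasDerivAt (fun lam : ℝ => L (x, lam • v)) (M1 L (x, v) ((0 : Vec n), v)) 1 := by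
    simpa [Function.comp_def] using hL1.comp_hasDerivAt 1 hc
  have hright : HasDerivAt (fun lam : ℝ => lam ^ 2 * L (x, v)) (2 * L (x, v)) 1 := by
    simpa using (hasDerivAt_pow 2 (1 : ℝ)).mul_const (L (x, v))
  have hev : (fun lam : ℝ => L (x, lam • v)) =ᶠ[nhds (1 : ℝ)] fun lam => lam ^ 2 * L (x, v) := by
    filter_upwards [eventually_gt_nhds zero_lt_one] with lam hlam
    exact hL.homogeneous (x, v) hp lam hlam
  exact (hcurve.unique (hright.congr_of_eventuallyEq hev)).symm ▸ rfl

end Euler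

end ChernAux
namespace ChernAux

open ContinuousLinearMap

variable {n : ℕ}

section Euler2

variable {Ω : Set (Vec n)} {A : Set (Vec n × Vec n)} {L : Vec n × Vec n → ℝ}

/-- The continuous linear map `q ↦ (0, q.2)`. -/
def sndZ : (Vec n × Vec n) →L[ℝ] (Vec n × Vec n) :=
  (0 : (Vec n × Vec n) →L[ℝ] Vec n).prod (ContinuousLinearMap.snd ℝ (Vec n) (Vec n))

theorem sndZ_apply (q : Vec n × Vec n) : sndZ (n := n) q = ((0 : Vec n), q.2) := rfl

theorem euler2 (hL : IsPseudoFinsler Ω A L) {p : Vec n × Vec n} (hp : p ∈ A)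
    (h : Vec n × Vec n) :
    M2 L p h ((0 : Vec n), p.2) + M1 L p ((0 : Vec n), h.2) = 2 * M1 L p h := by
  have hu : HasFDerivAt (fun q : Vec n × Vec n => (((0 : Vec n), q.2) : Vec n × Vec n))
      (sndZ (n := n)) p := sndZ.hasFDerivAt
  have hPhi : HasFDerivAt (fun q : Vec n × Vec n => M1 L q ((0 : Vec n), q.2))
      ((M1 L p).comp (sndZ (n := n)) + (M2 L p).flip (((0 : Vec n), p.2))) p :=
    (hasM2 hL hp).clm_apply hu
  have hPsi : HasFDerivAt (fun q => 2 * L q) ((2 : ℝ) • M1 L p) p :=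
    (hasM1 hL hp).const_mul 2
  have hev : (fun q : Vec n × Vec n => M1 L q ((0 : Vec n), q.2)) =ᶠ[nhds p]
      fun q => 2 * L q := by
    filter_upwards [hL.isOpen_dom.mem_nhds hp] with q hq using euler1 hL hq
  have heq := hPhi.unique (hPsi.congr_of_eventuallyEq hev)
  have happ := congrArg (fun T : (Vec n × Vec n) →L[ℝ] ℝ => T h) heq
  simp only [ContinuousLinearMap.add_apply, ContinuousLinearMap.comp_apply,
    ContinuousLinearMap.flip_apply, ContinuousLinearMap.smul_apply, smul_eq_mul,
    sndZ_apply] at happ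
  linarith [happ]

theorem euler3 (hL : IsPseudoFinsler Ω A L) {p : Vec n × Vec n} (hp : p ∈ A)
    (w z : Vec n) :
    M3 L p ((0 : Vec n), z) ((0 : Vec n), w) ((0 : Vec n), p.2) = 0 := by
  let ev : ((Vec n × Vec n) →L[ℝ] (Vec n × Vec n) →L[ℝ] ℝ) →L[ℝ] ((Vec n × Vec n) →L[ℝ] ℝ) :=
    ContinuousLinearMap.apply ℝ ((Vec n × Vec n) →L[ℝ] ℝ) (((0 : Vec n), w))
  let evw : ((Vec n × Vec n) →L[ℝ] ℝ) →L[ℝ] ℝ :=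
    ContinuousLinearMap.apply ℝ ℝ (((0 : Vec n), w))
  have hu : HasFDerivAt (fun q : Vec n × Vec n => (((0 : Vec n), q.2) : Vec n × Vec n))
      (sndZ (n := n)) p := sndZ.hasFDerivAt
  have hc : HasFDerivAt (fun q => M2 L q (((0 : Vec n), w))) (ev.comp (M3 L p)) p := by
    have := ev.hasFDerivAt.comp p (hasM3 hL hp)
    simpa [Function.comp_def, ev] using this
  have hG : HasFDerivAt (fun q : Vec n × Vec n => M2 L q ((0 : Vec n), w) ((0 : Vec n), q.2))
      ((M2 L p ((0 : Vec n), w)).comp (sndZ (n := n))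
        + (ev.comp (M3 L p)).flip ((0 : Vec n), p.2)) p := hc.clm_apply hu
  have hH : HasFDerivAt (fun q => M1 L q ((0 : Vec n), w)) (evw.comp (M2 L p)) p := by
    have := evw.hasFDerivAt.comp p (hasM2 hL hp)
    simpa [Function.comp_def, evw] using this
  have hev2 : (fun q : Vec n × Vec n => M2 L q ((0 : Vec n), w) ((0 : Vec n), q.2)) =ᶠ[nhds p]
      fun q => M1 L q ((0 : Vec n), w) := by
    filter_upwards [hL.isOpen_dom.mem_nhds hp] with q hq
    have := euler2 hL hq (((0 : Vec n), w))
    simp only at this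
    linarith [this]
  have heq := hG.unique (hH.congr_of_eventuallyEq hev2)
  have happ := congrArg (fun T : (Vec n × Vec n) →L[ℝ] ℝ => T (((0 : Vec n), z))) heq
  simp only [ContinuousLinearMap.add_apply, ContinuousLinearMap.comp_apply,
    ContinuousLinearMap.flip_apply, sndZ_apply, ev, evw,
    ContinuousLinearMap.apply_apply] at happ
  have hsym := symm2 hL hp (((0 : Vec n), z)) (((0 : Vec n), w))
  linarith [happ, hsym]

end Euler2

section Algebra
set_option synthInstance.maxHeartbeats 1000000

variable {L : Vec n × Vec n → ℝ} {p : Vec n × Vec n}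

theorem zmk_add (u u' : Vec n) :
    (((0 : Vec n), u + u') : Vec n × Vec n) = ((0 : Vec n), u) + ((0 : Vec n), u') := by
  simp [Prod.mk_add_mk]

theorem zmk_smul (c : ℝ) (u : Vec n) :
    (((0 : Vec n), c • u) : Vec n × Vec n) = c • (((0 : Vec n), u) : Vec n × Vec n) := by
  simp [Prod.smul_mk]

theorem zmk_sub (u u' : Vec n) :
    (((0 : Vec n), u - u') : Vec n × Vec n) = ((0 : Vec n), u) - ((0 : Vec n), u') := by
  simp [Prod.mk_sub_mk]

theorem fmk_add (u u' : Vec n) :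
    (((u + u', (0 : Vec n)) : Vec n × Vec n)) = (u, (0 : Vec n)) + (u', (0 : Vec n)) := by
  simp [Prod.mk_add_mk]

theorem fmk_smul (c : ℝ) (u : Vec n) :
    (((c • u, (0 : Vec n)) : Vec n × Vec n)) = c • ((u, (0 : Vec n)) : Vec n × Vec n) := by
  simp [Prod.smul_mk]

theorem gB_add_left (u u' w : Vec n) :
    gB L p (u + u') w = gB L p u w + gB L p u' w := by
  unfold gB; rw [zmk_add, map_add, ContinuousLinearMap.add_apply]; ring

theorem gB_smul_left (c : ℝ) (u w : Vec n) :
    gB L p (c • u) w = c * gB L p u w := by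
  unfold gB; rw [zmk_smul, map_smul, ContinuousLinearMap.smul_apply, smul_eq_mul]; ring

theorem gB_sub_left (u u' w : Vec n) :
    gB L p (u - u') w = gB L p u w - gB L p u' w := by
  unfold gB; rw [zmk_sub, map_sub, ContinuousLinearMap.sub_apply]; ring

theorem gB_add_right (u w w' : Vec n) :
    gB L p u (w + w') = gB L p u w + gB L p u w' := by
  unfold gB; rw [zmk_add, map_add]; ring

theorem gB_smul_right (c : ℝ) (u w : Vec n) :
    gB L p u (c • w) = c * gB L p u w := by
  unfold gB; rw [zmk_smul, map_smul, smul_eq_mul]; ring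

theorem gB_sub_right (u w w' : Vec n) :
    gB L p u (w - w') = gB L p u w - gB L p u w' := by
  unfold gB; rw [zmk_sub, map_sub]; ring

theorem CB_add1 (u u' w z : Vec n) :
    CB L p (u + u') w z = CB L p u w z + CB L p u' w z := by
  unfold CB
  rw [zmk_add, map_add, ContinuousLinearMap.add_apply, ContinuousLinearMap.add_apply]; ring

theorem CB_smul1 (c : ℝ) (u w z : Vec n) :
    CB L p (c • u) w z = c * CB L p u w z := by
  unfold CB
  rw [zmk_smul, map_smul, ContinuousLinearMap.smul_apply, ContinuousLinearMap.smul_apply,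
    smul_eq_mul]; ring

theorem CB_sub1 (u u' w z : Vec n) :
    CB L p (u - u') w z = CB L p u w z - CB L p u' w z := by
  unfold CB
  rw [zmk_sub, map_sub, ContinuousLinearMap.sub_apply, ContinuousLinearMap.sub_apply]; ring

theorem CB_zero1 (w z : Vec n) : CB L p 0 w z = 0 := by
  unfold CB
  rw [show (((0 : Vec n), (0 : Vec n)) : Vec n × Vec n) = 0 from rfl, map_zero]
  simp

theorem CB_add2 (u w w' z : Vec n) :
    CB L p u (w + w') z = CB L p u w z + CB L p u w' z := by
  unfold CB; rw [zmk_add, map_add, ContinuousLinearMap.add_apply]; ring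

theorem CB_smul2 (c : ℝ) (u w z : Vec n) :
    CB L p u (c • w) z = c * CB L p u w z := by
  unfold CB; rw [zmk_smul, map_smul, ContinuousLinearMap.smul_apply, smul_eq_mul]; ring

theorem CB_add3 (u w z z' : Vec n) :
    CB L p u w (z + z') = CB L p u w z + CB L p u w z' := by
  unfold CB; rw [zmk_add, map_add]; ring

theorem CB_smul3 (c : ℝ) (u w z : Vec n) :
    CB L p u w (c • z) = c * CB L p u w z := by
  unfold CB; rw [zmk_smul, map_smul, smul_eq_mul]; ring

theorem SB_add1 (u u' w z : Vec n) :
    SB L p (u + u') w z = SB L p u w z + SB L p u' w z := by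
  unfold SB
  rw [fmk_add, map_add, ContinuousLinearMap.add_apply, ContinuousLinearMap.add_apply]; ring

theorem SB_smul1 (c : ℝ) (u w z : Vec n) :
    SB L p (c • u) w z = c * SB L p u w z := by
  unfold SB
  rw [fmk_smul, map_smul, ContinuousLinearMap.smul_apply, ContinuousLinearMap.smul_apply,
    smul_eq_mul]; ring

theorem SB_add2 (u w w' z : Vec n) :
    SB L p u (w + w') z = SB L p u w z + SB L p u w' z := by
  unfold SB; rw [zmk_add, map_add, ContinuousLinearMap.add_apply]; ring

theorem SB_smul2 (c : ℝ) (u w z : Vec n) :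
    SB L p u (c • w) z = c * SB L p u w z := by
  unfold SB; rw [zmk_smul, map_smul, ContinuousLinearMap.smul_apply, smul_eq_mul]; ring

theorem SB_add3 (u w z z' : Vec n) :
    SB L p u w (z + z') = SB L p u w z + SB L p u w z' := by
  unfold SB; rw [zmk_add, map_add]; ring

theorem SB_smul3 (c : ℝ) (u w z : Vec n) :
    SB L p u w (c • z) = c * SB L p u w z := by
  unfold SB; rw [zmk_smul, map_smul, smul_eq_mul]; ring

end Algebra

section SymmCor

variable {Ω : Set (Vec n)} {A : Set (Vec n × Vec n)} {L : Vec n × Vec n → ℝ}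

theorem CB_swap12 (hL : IsPseudoFinsler Ω A L) {p : Vec n × Vec n} (hp : p ∈ A)
    (u w z : Vec n) : CB L p u w z = CB L p w u z := by
  unfold CB; rw [symm3_12 hL hp]

theorem CB_swap23 (hL : IsPseudoFinsler Ω A L) {p : Vec n × Vec n} (hp : p ∈ A)
    (u w z : Vec n) : CB L p u w z = CB L p u z w := by
  unfold CB; rw [symm3_23 hL hp]

theorem SB_swap23 (hL : IsPseudoFinsler Ω A L) {p : Vec n × Vec n} (hp : p ∈ A)
    (u w z : Vec n) : SB L p u w z = SB L p u z w := by
  unfold SB; rw [symm3_23 hL hp]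

theorem CB_v1 (hL : IsPseudoFinsler Ω A L) {p : Vec n × Vec n} (hp : p ∈ A)
    (w z : Vec n) : CB L p p.2 w z = 0 := by
  unfold CB
  rw [symm3_12 hL hp, symm3_23 hL hp, euler3 hL hp]
  ring

theorem CB_v2 (hL : IsPseudoFinsler Ω A L) {p : Vec n × Vec n} (hp : p ∈ A)
    (u z : Vec n) : CB L p u p.2 z = 0 := by
  rw [CB_swap12 hL hp]; exact CB_v1 hL hp u z

theorem CB_v3 (hL : IsPseudoFinsler Ω A L) {p : Vec n × Vec n} (hp : p ∈ A)
    (u w : Vec n) : CB L p u w p.2 = 0 := by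
  rw [CB_swap23 hL hp]; exact CB_v2 hL hp u w

end SymmCor

end ChernAux
namespace ChernAux

open ContinuousLinearMap

variable {n : ℕ}

/-- Standard basis vector. -/
def ee (i : Fin n) : Vec n := Pi.single i 1

theorem vec_expand (w : Vec n) : w = ∑ i, w i • ee i := by
  funext j
  simp [ee, Pi.single_apply, Finset.sum_apply, mul_ite]

theorem lin_expand {M : Type*} [AddCommGroup M] [Module ℝ M] (f : Vec n → M)
    (hadd : ∀ a b, f (a + b) = f a + f b) (hsmul : ∀ (c : ℝ) a, f (c • a) = c • f a)
    (w : Vec n) : f w = ∑ i, w i • f (ee i) := by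
  have h0 : f 0 = 0 := by
    have := hadd 0 0
    simpa using this
  have hs : ∀ (s : Finset (Fin n)) (g : Fin n → Vec n),
      f (∑ i ∈ s, g i) = ∑ i ∈ s, f (g i) := by
    intro s g
    induction s using Finset.cons_induction with
    | empty => simpa
    | cons i s hi ih => rw [Finset.sum_cons, Finset.sum_cons, hadd, ih]
  conv_lhs => rw [vec_expand w]
  rw [hs]
  simp [hsmul]

theorem lin_expand' (f : Vec n → ℝ)
    (hadd : ∀ a b, f (a + b) = f a + f b) (hsmul : ∀ (c : ℝ) a, f (c • a) = c * f a)
    (w : Vec n) : f w = ∑ i, w i * f (ee i) := by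
  simpa [smul_eq_mul] using lin_expand f hadd (by simpa [smul_eq_mul] using hsmul) w

/-- Coordinate projection as a continuous linear map. -/
def proj' (i : Fin n) : Vec n →L[ℝ] ℝ := ContinuousLinearMap.proj i

section WithV

variable (L : Vec n × Vec n → ℝ) (V : Vec n → Vec n)

/-- The Koszul data tensor. -/
def Kf (x : Vec n) (u w z : Vec n) : ℝ :=
  SB L (x, V x) u w z + SB L (x, V x) w z u - SB L (x, V x) z u w

/-- The metric as an endomorphism of `ℝⁿ` (via the basis pairing). -/
def Ghat (x : Vec n) : Vec n →L[ℝ] Vec n :=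
  ∑ i, ∑ j, gB L (x, V x) (ee i) (ee j) • ((proj' i).smulRight (ee j))

/-- Inverse of `Ghat` (junk if not invertible). -/
def solvA (x : Vec n) : Vec n →L[ℝ] Vec n := (Ghat L V x).inverse

/-- `Γ(v,v)`. -/
def aV (x : Vec n) : Vec n :=
  solvA L V x (fun j => (1/2) * Kf L V x (V x) (V x) (ee j))

/-- `Γ(u,v)`. -/
def bV (x : Vec n) (u : Vec n) : Vec n :=
  solvA L V x (fun j => (1/2) * Kf L V x u (V x) (ee j) - CB L (x, V x) (aV L V x) (ee j) u)

/-- The Christoffel bilinear map (unbundled). -/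
def Gf (x : Vec n) (u w : Vec n) : Vec n :=
  solvA L V x (fun j => (1/2) * Kf L V x u w (ee j)
    - CB L (x, V x) (bV L V x u) w (ee j)
    - CB L (x, V x) (bV L V x w) (ee j) u
    + CB L (x, V x) (bV L V x (ee j)) u w)

/-- Elementary bilinear-map-valued injection. -/
def EE (i j : Fin n) : Vec n →L[ℝ] Bil n :=
  (ContinuousLinearMap.smulRightL ℝ (Vec n) (Vec n →L[ℝ] Vec n) (proj' i)).comp
    (ContinuousLinearMap.smulRightL ℝ (Vec n) (Vec n) (proj' j))

/-- The connection datum. -/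
def Gam (x : Vec n) : Bil n := ∑ i, ∑ j, EE i j (Gf L V x (ee i) (ee j))

theorem EE_apply (i j : Fin n) (v u w : Vec n) :
    EE i j v u w = u i • (w j • v) := by
  have h : EE i j v = (proj' i).smulRight ((proj' j).smulRight v) := rfl
  rw [h]
  simp [proj']

theorem Gam_apply' (x : Vec n) (u w : Vec n) :
    Gam L V x u w = ∑ i, ∑ j, u i • (w j • Gf L V x (ee i) (ee j)) := by
  unfold Gam
  simp only [ContinuousLinearMap.sum_apply]
  simp only [EE_apply]

theorem Ghat_coord (x : Vec n) (u : Vec n) (j : Fin n) :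
    Ghat L V x u j = ∑ i, u i * gB L (x, V x) (ee i) (ee j) := by
  unfold Ghat
  rw [ContinuousLinearMap.sum_apply, Finset.sum_apply]
  congr 1
  funext i
  rw [ContinuousLinearMap.sum_apply, Finset.sum_apply]
  rw [Finset.sum_eq_single j]
  · simp [proj', ee]
    ring
  · intro b _ hb
    simp [proj', ee, Pi.single_apply, hb]
  · intro hj
    exact absurd (Finset.mem_univ j) hj

theorem gB_coord (x : Vec n) (u w : Vec n) :
    gB L (x, V x) u w = ∑ j, w j * (∑ i, u i * gB L (x, V x) (ee i) (ee j)) := by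
  have h1 : gB L (x, V x) u w = ∑ j, w j * gB L (x, V x) u (ee j) :=
    lin_expand' (fun w => gB L (x, V x) u w) (gB_add_right u) (gB_smul_right · u ·) w
  rw [h1]
  congr 1
  funext j
  congr 1
  exact lin_expand' (fun u => gB L (x, V x) u (ee j)) (gB_add_left · · (ee j))
    (gB_smul_left · · (ee j)) u

theorem Ghat_pair (x : Vec n) (u w : Vec n) :
    gB L (x, V x) u w = ∑ j, w j * Ghat L V x u j := by
  rw [gB_coord]
  congr 1
  funext j
  rw [Ghat_coord]

end WithV

section WithVH

variable {Ω : Set (Vec n)} {A : Set (Vec n × Vec n)} {L : Vec n × Vec n → ℝ}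
  {V : Vec n → Vec n}

theorem gB_nondeg (hL : IsPseudoFinsler Ω A L) {p : Vec n × Vec n} (hp : p ∈ A)
    {u : Vec n} (h : ∀ w, gB L p u w = 0) : u = 0 := by
  apply hL.g_nondeg p hp u
  intro w
  rw [show gF L p.1 p.2 u w = gB L p u w from gF_eq hL (by simpa using hp) u w]
  exact h w

theorem gB_symm (hL : IsPseudoFinsler Ω A L) {p : Vec n × Vec n} (hp : p ∈ A)
    (u w : Vec n) : gB L p u w = gB L p w u := by
  rw [← gF_eq hL (by simpa using hp), ← gF_eq hL (by simpa using hp)]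
  exact hL.g_symm p hp u w

theorem gB_cancel (hL : IsPseudoFinsler Ω A L) {p : Vec n × Vec n} (hp : p ∈ A)
    {u u' : Vec n} (h : ∀ w, gB L p u w = gB L p u' w) : u = u' := by
  have : ∀ w, gB L p (u - u') w = 0 := by
    intro w
    rw [gB_sub_left, h w, sub_self]
  have := gB_nondeg hL hp this
  exact sub_eq_zero.mp this

theorem Ghat_bij (hL : IsPseudoFinsler Ω A L) (hV : LAdmissible A Ω V)
    {x : Vec n} (hx : x ∈ Ω) : Function.Bijective (Ghat L V x) := by
  have hxA : (x, V x) ∈ A := hV.2 x hx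
  have hinj : Function.Injective (Ghat L V x) := by
    intro a b hab
    have hz : Ghat L V x (a - b) = 0 := by rw [map_sub, hab, sub_self]
    have hgz : ∀ w, gB L (x, V x) (a - b) w = 0 := by
      intro w
      rw [Ghat_pair L V x (a - b) w, hz]
      simp
    have := gB_nondeg hL hxA hgz
    exact sub_eq_zero.mp this
  refine ⟨hinj, ?_⟩
  have := (LinearMap.injective_iff_surjective
    (f := ((Ghat L V x : Vec n →L[ℝ] Vec n) : Vec n →ₗ[ℝ] Vec n))).mp hinj
  exact this

theorem solv_spec (hL : IsPseudoFinsler Ω A L) (hV : LAdmissible A Ω V)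
    {x : Vec n} (hx : x ∈ Ω) (c : Vec n) :
    Ghat L V x (solvA L V x c) = c := by
  let e₀ : Vec n ≃ₗ[ℝ] Vec n :=
    LinearEquiv.ofBijective ((Ghat L V x : Vec n →L[ℝ] Vec n) : Vec n →ₗ[ℝ] Vec n)
      (Ghat_bij hL hV hx)
  let e : Vec n ≃L[ℝ] Vec n := e₀.toContinuousLinearEquiv
  have hE : (e : Vec n →L[ℝ] Vec n) = Ghat L V x := by
    ext w
    rfl
  have hsolv : solvA L V x = (e.symm : Vec n →L[ℝ] Vec n) := by
    unfold solvA
    rw [← hE, ContinuousLinearMap.inverse_equiv]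
  rw [hsolv, ← hE]
  have : e ((e.symm : Vec n →L[ℝ] Vec n) c) = c := by
    simp
  simpa using this

theorem solv_gB (hL : IsPseudoFinsler Ω A L) (hV : LAdmissible A Ω V)
    {x : Vec n} (hx : x ∈ Ω) (c : Vec n) (w : Vec n) :
    gB L (x, V x) (solvA L V x c) w = ∑ j, w j * c j := by
  rw [Ghat_pair L V x _ w, solv_spec hL hV hx c]

end WithVH

end ChernAux
namespace ChernAux

open ContinuousLinearMap

variable {n : ℕ}

section KfAlg

variable {L : Vec n × Vec n → ℝ} {V : Vec n → Vec n} {x : Vec n}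

theorem kf_add1 (u u' w z : Vec n) :
    Kf L V x (u + u') w z = Kf L V x u w z + Kf L V x u' w z := by
  unfold Kf; rw [SB_add1, SB_add3, SB_add2]; ring

theorem kf_smul1 (c : ℝ) (u w z : Vec n) :
    Kf L V x (c • u) w z = c * Kf L V x u w z := by
  unfold Kf; rw [SB_smul1, SB_smul3, SB_smul2]; ring

theorem kf_add2 (u w w' z : Vec n) :
    Kf L V x u (w + w') z = Kf L V x u w z + Kf L V x u w' z := by
  unfold Kf; rw [SB_add2, SB_add1, SB_add3]; ring

theorem kf_smul2 (c : ℝ) (u w z : Vec n) :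
    Kf L V x u (c • w) z = c * Kf L V x u w z := by
  unfold Kf; rw [SB_smul2, SB_smul1, SB_smul3]; ring

theorem kf_add3 (u w z z' : Vec n) :
    Kf L V x u w (z + z') = Kf L V x u w z + Kf L V x u w z' := by
  unfold Kf; rw [SB_add3, SB_add2, SB_add1]; ring

theorem kf_smul3 (c : ℝ) (u w z : Vec n) :
    Kf L V x u w (c • z) = c * Kf L V x u w z := by
  unfold Kf; rw [SB_smul3, SB_smul2, SB_smul1]; ring

theorem bV_add (u u' : Vec n) :
    bV L V x (u + u') = bV L V x u + bV L V x u' := by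
  unfold bV
  rw [← map_add]
  congr 1
  funext j
  simp only [Pi.add_apply]
  rw [kf_add1, CB_add3]
  ring

theorem bV_smul (c : ℝ) (u : Vec n) :
    bV L V x (c • u) = c • bV L V x u := by
  unfold bV
  rw [← map_smul]
  congr 1
  funext j
  simp only [Pi.smul_apply, smul_eq_mul]
  rw [kf_smul1, CB_smul3]
  ring

theorem Gf_add1 (u u' w : Vec n) :
    Gf L V x (u + u') w = Gf L V x u w + Gf L V x u' w := by
  unfold Gf
  rw [← map_add]
  congr 1
  funext j
  simp only [Pi.add_apply]
  rw [kf_add1, bV_add, CB_add1, CB_add2, CB_add3]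
  ring

theorem Gf_smul1 (c : ℝ) (u w : Vec n) :
    Gf L V x (c • u) w = c • Gf L V x u w := by
  unfold Gf
  rw [← map_smul]
  congr 1
  funext j
  simp only [Pi.smul_apply, smul_eq_mul]
  rw [kf_smul1, bV_smul, CB_smul1, CB_smul2, CB_smul3]
  ring

theorem Gf_add2 (u w w' : Vec n) :
    Gf L V x u (w + w') = Gf L V x u w + Gf L V x u w' := by
  unfold Gf
  rw [← map_add]
  congr 1
  funext j
  simp only [Pi.add_apply]
  rw [kf_add2, bV_add, CB_add1, CB_add2, CB_add3]
  ring

theorem Gf_smul2 (c : ℝ) (u w : Vec n) :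
    Gf L V x u (c • w) = c • Gf L V x u w := by
  unfold Gf
  rw [← map_smul]
  congr 1
  funext j
  simp only [Pi.smul_apply, smul_eq_mul]
  rw [kf_smul2, bV_smul, CB_smul1, CB_smul2, CB_smul3]
  ring

theorem Gam_eq_Gf (u w : Vec n) : Gam L V x u w = Gf L V x u w := by
  rw [Gam_apply']
  have h1 : Gf L V x u w = ∑ i, u i • Gf L V x (ee i) w :=
    lin_expand (fun u => Gf L V x u w) (fun a b => Gf_add1 a b w)
      (fun c a => Gf_smul1 c a w) u
  rw [h1]
  congr 1
  funext i
  have h2 : Gf L V x (ee i) w = ∑ j, w j • Gf L V x (ee i) (ee j) :=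
    lin_expand (fun w => Gf L V x (ee i) w) (fun a b => Gf_add2 (ee i) a b)
      (fun c a => Gf_smul2 c (ee i) a) w
  rw [h2, Finset.smul_sum]

end KfAlg

section Pointwise

variable {Ω : Set (Vec n)} {A : Set (Vec n × Vec n)} {L : Vec n × Vec n → ℝ}
  {V : Vec n → Vec n} {x : Vec n}

theorem gB_aV (hL : IsPseudoFinsler Ω A L) (hV : LAdmissible A Ω V) (hx : x ∈ Ω) (z : Vec n) :
    gB L (x, V x) (aV L V x) z = (1/2) * Kf L V x (V x) (V x) z := by
  unfold aV
  rw [solv_gB hL hV hx]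
  exact (lin_expand' (fun z => (1/2) * Kf L V x (V x) (V x) z)
    (fun a b => by rw [kf_add3]; ring) (fun c a => by rw [kf_smul3]; ring) z).symm

theorem gB_bV (hL : IsPseudoFinsler Ω A L) (hV : LAdmissible A Ω V) (hx : x ∈ Ω)
    (u z : Vec n) :
    gB L (x, V x) (bV L V x u) z
      = (1/2) * Kf L V x u (V x) z - CB L (x, V x) (aV L V x) z u := by
  unfold bV
  rw [solv_gB hL hV hx]
  exact (lin_expand' (fun z => (1/2) * Kf L V x u (V x) z - CB L (x, V x) (aV L V x) z u)
    (fun a b => by rw [kf_add3, CB_add2]; ring)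
    (fun c a => by rw [kf_smul3, CB_smul2]; ring) z).symm

theorem gB_Gf (hL : IsPseudoFinsler Ω A L) (hV : LAdmissible A Ω V) (hx : x ∈ Ω)
    (u w z : Vec n) :
    gB L (x, V x) (Gf L V x u w) z
      = (1/2) * Kf L V x u w z - CB L (x, V x) (bV L V x u) w z
        - CB L (x, V x) (bV L V x w) z u + CB L (x, V x) (bV L V x z) u w := by
  unfold Gf
  rw [solv_gB hL hV hx]
  exact (lin_expand' (fun z => (1/2) * Kf L V x u w z - CB L (x, V x) (bV L V x u) w z
      - CB L (x, V x) (bV L V x w) z u + CB L (x, V x) (bV L V x z) u w)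
    (fun a b => by rw [kf_add3, CB_add3, CB_add2, bV_add, CB_add1]; ring)
    (fun c a => by rw [kf_smul3, CB_smul3, CB_smul2, bV_smul, CB_smul1]; ring) z).symm

theorem bV_v (hL : IsPseudoFinsler Ω A L) (hV : LAdmissible A Ω V) (hx : x ∈ Ω) :
    bV L V x (V x) = aV L V x := by
  have hxA : (x, V x) ∈ A := hV.2 x hx
  apply gB_cancel hL hxA
  intro z
  rw [gB_bV hL hV hx, gB_aV hL hV hx]
  have h0 : CB L (x, V x) (aV L V x) z (V x) = 0 := CB_v3 hL hxA _ _
  rw [h0]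
  ring

theorem Gf_v (hL : IsPseudoFinsler Ω A L) (hV : LAdmissible A Ω V) (hx : x ∈ Ω) (u : Vec n) :
    Gf L V x u (V x) = bV L V x u := by
  have hxA : (x, V x) ∈ A := hV.2 x hx
  apply gB_cancel hL hxA
  intro z
  rw [gB_Gf hL hV hx, gB_bV hL hV hx]
  have h1 : CB L (x, V x) (bV L V x u) (V x) z = 0 := CB_v2 hL hxA _ _
  have h2 : CB L (x, V x) (bV L V x z) u (V x) = 0 := CB_v3 hL hxA _ _
  rw [h1, h2, bV_v hL hV hx]
  ring

theorem kf_swap (hL : IsPseudoFinsler Ω A L) (hxA : (x, V x) ∈ A) (u w z : Vec n) :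
    Kf L V x u w z = Kf L V x w u z := by
  unfold Kf
  have h1 := SB_swap23 hL hxA u z w
  have h2 := SB_swap23 hL hxA w u z
  have h3 := SB_swap23 hL hxA z w u
  linarith

theorem kf_pair (hL : IsPseudoFinsler Ω A L) (hxA : (x, V x) ∈ A) (u w z : Vec n) :
    Kf L V x u w z + Kf L V x u z w = 2 * SB L (x, V x) u w z := by
  unfold Kf
  have h1 := SB_swap23 hL hxA u z w
  have h2 := SB_swap23 hL hxA w z u
  have h3 := SB_swap23 hL hxA z w u
  linarith

theorem Gf_symm (hL : IsPseudoFinsler Ω A L) (hV : LAdmissible A Ω V) (hx : x ∈ Ω)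
    (u w : Vec n) : Gf L V x u w = Gf L V x w u := by
  have hxA : (x, V x) ∈ A := hV.2 x hx
  apply gB_cancel hL hxA
  intro z
  rw [gB_Gf hL hV hx, gB_Gf hL hV hx]
  have hk := kf_swap hL hxA u w z
  have c1 := CB_swap23 hL hxA (bV L V x u) w z
  have c2 := CB_swap23 hL hxA (bV L V x w) z u
  have c3 := CB_swap23 hL hxA (bV L V x z) u w
  linarith

theorem main_id (hL : IsPseudoFinsler Ω A L) (hV : LAdmissible A Ω V) (hx : x ∈ Ω)
    (u w z : Vec n) :
    SB L (x, V x) u w z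
      = gB L (x, V x) (Gf L V x u w) z + gB L (x, V x) (Gf L V x u z) w
        + 2 * CB L (x, V x) (Gf L V x u (V x)) w z := by
  have hxA : (x, V x) ∈ A := hV.2 x hx
  rw [Gf_v hL hV hx]
  rw [gB_Gf hL hV hx, gB_Gf hL hV hx]
  have hk := kf_pair hL hxA u w z
  have c1 := CB_swap23 hL hxA (bV L V x u) w z
  have c2 := CB_swap23 hL hxA (bV L V x w) z u
  have c3 := CB_swap23 hL hxA (bV L V x z) u w
  linarith

end Pointwise

end ChernAux
namespace ChernAux

open ContinuousLinearMap

variable {n : ℕ}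

section DerivFormula

variable {Ω : Set (Vec n)} {A : Set (Vec n × Vec n)} {L : Vec n × Vec n → ℝ}
  {V : Vec n → Vec n}

theorem fderiv_g_formula (hL : IsPseudoFinsler Ω A L) (hV : LAdmissible A Ω V)
    {Y Z : Vec n → Vec n} (hY : ContDiffOn ℝ (⊤ : ℕ∞) Y Ω) (hZ : ContDiffOn ℝ (⊤ : ℕ∞) Z Ω)
    {x : Vec n} (hx : x ∈ Ω) (u : Vec n) :
    fderiv ℝ (fun y => gF L y (V y) (Y y) (Z y)) x u
      = SB L (x, V x) u (Y x) (Z x)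
        + 2 * CB L (x, V x) (fderiv ℝ V x u) (Y x) (Z x)
        + gB L (x, V x) (fderiv ℝ Y x u) (Z x)
        + gB L (x, V x) (Y x) (fderiv ℝ Z x u) := by
  have hxA : (x, V x) ∈ A := hV.2 x hx
  have hVd : HasFDerivAt V (fderiv ℝ V x) x :=
    ((hV.1.contDiffAt (hL.isOpen_base.mem_nhds hx)).differentiableAt (by simp)).hasFDerivAt
  have hYd : HasFDerivAt Y (fderiv ℝ Y x) x :=
    ((hY.contDiffAt (hL.isOpen_base.mem_nhds hx)).differentiableAt (by simp)).hasFDerivAt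
  have hZd : HasFDerivAt Z (fderiv ℝ Z x) x :=
    ((hZ.contDiffAt (hL.isOpen_base.mem_nhds hx)).differentiableAt (by simp)).hasFDerivAt
  set dV := fderiv ℝ V x
  set dY := fderiv ℝ Y x
  set dZ := fderiv ℝ Z x
  set dphi : Vec n →L[ℝ] Vec n × Vec n := (ContinuousLinearMap.id ℝ (Vec n)).prod dV with hdphi
  have hphi : HasFDerivAt (fun y => ((y, V y) : Vec n × Vec n)) dphi x :=
    (hasFDerivAt_id x).prodMk hVd
  have h2 : HasFDerivAt (fun y => M2 L (y, V y)) ((M3 L (x, V x)).comp dphi) x := by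
    have := (hasM3 hL hxA).comp x hphi
    simpa [Function.comp_def] using this
  have hYp : HasFDerivAt (fun y => (((0 : Vec n), Y y) : Vec n × Vec n))
      ((0 : Vec n →L[ℝ] Vec n).prod dY) x := (hasFDerivAt_const (0 : Vec n) x).prodMk hYd
  have hZp : HasFDerivAt (fun y => (((0 : Vec n), Z y) : Vec n × Vec n))
      ((0 : Vec n →L[ℝ] Vec n).prod dZ) x := (hasFDerivAt_const (0 : Vec n) x).prodMk hZd
  have h4 := h2.clm_apply hYp
  have h5 := h4.clm_apply hZp
  have h6 := h5.const_mul (1/2 : ℝ)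
  have hev : (fun y => gF L y (V y) (Y y) (Z y)) =ᶠ[nhds x]
      (fun y => (1/2 : ℝ) * M2 L (y, V y) ((0 : Vec n), Y y) ((0 : Vec n), Z y)) := by
    filter_upwards [hL.isOpen_base.mem_nhds hx] with y hy
    have := gF_eq hL (hV.2 y hy) (Y y) (Z y)
    simpa [gB] using this
  have hfinal := h6.congr_of_eventuallyEq hev
  rw [hfinal.fderiv]
  have hsplit : ((u, dV u) : Vec n × Vec n) = (u, (0 : Vec n)) + ((0 : Vec n), dV u) := by
    simp [Prod.mk_add_mk]
  simp only [hdphi, ContinuousLinearMap.smul_apply, ContinuousLinearMap.add_apply,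
    ContinuousLinearMap.comp_apply, ContinuousLinearMap.flip_apply,
    ContinuousLinearMap.prod_apply, ContinuousLinearMap.coe_id', id_eq,
    ContinuousLinearMap.zero_apply, smul_eq_mul]
  rw [hsplit, (M3 L (x, V x)).map_add]
  simp only [ContinuousLinearMap.add_apply]
  unfold SB CB gB
  ring

end DerivFormula

end ChernAux
namespace ChernAux

open ContinuousLinearMap

variable {n : ℕ}

section Smooth

variable {Ω : Set (Vec n)} {A : Set (Vec n × Vec n)} {L : Vec n × Vec n → ℝ}
  {V : Vec n → Vec n}

theorem smooth_phi (hV : LAdmissible A Ω V) :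
    ContDiffOn ℝ (⊤ : ℕ∞) (fun x => ((x, V x) : Vec n × Vec n)) Ω :=
  contDiffOn_id.prodMk hV.1

theorem smooth_M2phi (hL : IsPseudoFinsler Ω A L) (hV : LAdmissible A Ω V) :
    ContDiffOn ℝ (⊤ : ℕ∞) (fun x => M2 L (x, V x)) Ω :=
  (cM2 hL).comp (smooth_phi hV) (fun x hx => hV.2 x hx)

theorem smooth_M3phi (hL : IsPseudoFinsler Ω A L) (hV : LAdmissible A Ω V) :
    ContDiffOn ℝ (⊤ : ℕ∞) (fun x => M3 L (x, V x)) Ω :=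
  (cM3 hL).comp (smooth_phi hV) (fun x hx => hV.2 x hx)

theorem smooth_gBf (hL : IsPseudoFinsler Ω A L) (hV : LAdmissible A Ω V)
    {f g : Vec n → Vec n} (hf : ContDiffOn ℝ (⊤ : ℕ∞) f Ω) (hg : ContDiffOn ℝ (⊤ : ℕ∞) g Ω) :
    ContDiffOn ℝ (⊤ : ℕ∞) (fun x => gB L (x, V x) (f x) (g x)) Ω := by
  unfold gB
  exact contDiffOn_const.mul (((smooth_M2phi hL hV).clm_apply
    (contDiffOn_const.prodMk hf)).clm_apply (contDiffOn_const.prodMk hg))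

theorem smooth_CBf (hL : IsPseudoFinsler Ω A L) (hV : LAdmissible A Ω V)
    {f g h : Vec n → Vec n} (hf : ContDiffOn ℝ (⊤ : ℕ∞) f Ω) (hg : ContDiffOn ℝ (⊤ : ℕ∞) g Ω)
    (hh : ContDiffOn ℝ (⊤ : ℕ∞) h Ω) :
    ContDiffOn ℝ (⊤ : ℕ∞) (fun x => CB L (x, V x) (f x) (g x) (h x)) Ω := by
  unfold CB
  exact contDiffOn_const.mul ((((smooth_M3phi hL hV).clm_apply
    (contDiffOn_const.prodMk hf)).clm_apply (contDiffOn_const.prodMk hg)).clm_apply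
    (contDiffOn_const.prodMk hh))

theorem smooth_SBf (hL : IsPseudoFinsler Ω A L) (hV : LAdmissible A Ω V)
    {f g h : Vec n → Vec n} (hf : ContDiffOn ℝ (⊤ : ℕ∞) f Ω) (hg : ContDiffOn ℝ (⊤ : ℕ∞) g Ω)
    (hh : ContDiffOn ℝ (⊤ : ℕ∞) h Ω) :
    ContDiffOn ℝ (⊤ : ℕ∞) (fun x => SB L (x, V x) (f x) (g x) (h x)) Ω := by
  unfold SB
  exact contDiffOn_const.mul ((((smooth_M3phi hL hV).clm_apply
    (hf.prodMk contDiffOn_const)).clm_apply (contDiffOn_const.prodMk hg)).clm_apply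
    (contDiffOn_const.prodMk hh))

theorem smooth_Kff (hL : IsPseudoFinsler Ω A L) (hV : LAdmissible A Ω V)
    {f g h : Vec n → Vec n} (hf : ContDiffOn ℝ (⊤ : ℕ∞) f Ω) (hg : ContDiffOn ℝ (⊤ : ℕ∞) g Ω)
    (hh : ContDiffOn ℝ (⊤ : ℕ∞) h Ω) :
    ContDiffOn ℝ (⊤ : ℕ∞) (fun x => Kf L V x (f x) (g x) (h x)) Ω := by
  unfold Kf
  exact ((smooth_SBf hL hV hf hg hh).add (smooth_SBf hL hV hg hh hf)).sub
    (smooth_SBf hL hV hh hf hg)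

theorem smooth_Ghat (hL : IsPseudoFinsler Ω A L) (hV : LAdmissible A Ω V) :
    ContDiffOn ℝ (⊤ : ℕ∞) (Ghat L V) Ω := by
  unfold Ghat
  apply ContDiffOn.sum
  intro i _
  apply ContDiffOn.sum
  intro j _
  exact (smooth_gBf hL hV contDiffOn_const contDiffOn_const).smul contDiffOn_const

theorem smooth_solv (hL : IsPseudoFinsler Ω A L) (hV : LAdmissible A Ω V) :
    ContDiffOn ℝ (⊤ : ℕ∞) (solvA L V) Ω := by
  intro x hx
  apply ContDiffAt.contDiffWithinAt
  have hg : ContDiffAt ℝ (⊤ : ℕ∞) (Ghat L V) x :=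
    (smooth_Ghat hL hV).contDiffAt (hL.isOpen_base.mem_nhds hx)
  have hinv : ContDiffAt ℝ (⊤ : ℕ∞) (ContinuousLinearMap.inverse) (Ghat L V x) := by
    let e₀ : Vec n ≃ₗ[ℝ] Vec n :=
      LinearEquiv.ofBijective ((Ghat L V x : Vec n →L[ℝ] Vec n) : Vec n →ₗ[ℝ] Vec n)
        (Ghat_bij hL hV hx)
    let e : Vec n ≃L[ℝ] Vec n := e₀.toContinuousLinearEquiv
    have hE : (e : Vec n →L[ℝ] Vec n) = Ghat L V x := by ext w; rfl
    rw [← hE]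
    exact contDiffAt_map_inverse e
  have := hinv.comp x hg
  exact this

theorem smooth_aV (hL : IsPseudoFinsler Ω A L) (hV : LAdmissible A Ω V) :
    ContDiffOn ℝ (⊤ : ℕ∞) (aV L V) Ω := by
  unfold aV
  apply (smooth_solv hL hV).clm_apply
  apply contDiffOn_pi.2
  intro j
  exact contDiffOn_const.mul (smooth_Kff hL hV hV.1 hV.1 contDiffOn_const)

theorem smooth_bVk (hL : IsPseudoFinsler Ω A L) (hV : LAdmissible A Ω V) (k : Fin n) :
    ContDiffOn ℝ (⊤ : ℕ∞) (fun x => bV L V x (ee k)) Ω := by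
  unfold bV
  apply (smooth_solv hL hV).clm_apply
  apply contDiffOn_pi.2
  intro j
  exact (contDiffOn_const.mul (smooth_Kff hL hV contDiffOn_const hV.1 contDiffOn_const)).sub
    (smooth_CBf hL hV (smooth_aV hL hV) contDiffOn_const contDiffOn_const)

theorem smooth_Gfij (hL : IsPseudoFinsler Ω A L) (hV : LAdmissible A Ω V) (i j : Fin n) :
    ContDiffOn ℝ (⊤ : ℕ∞) (fun x => Gf L V x (ee i) (ee j)) Ω := by
  unfold Gf
  apply (smooth_solv hL hV).clm_apply
  apply contDiffOn_pi.2
  intro j'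
  refine (((contDiffOn_const.mul (smooth_Kff hL hV contDiffOn_const contDiffOn_const
    contDiffOn_const)).sub (smooth_CBf hL hV (smooth_bVk hL hV i) contDiffOn_const
    contDiffOn_const)).sub (smooth_CBf hL hV (smooth_bVk hL hV j) contDiffOn_const
    contDiffOn_const)).add (smooth_CBf hL hV (smooth_bVk hL hV j') contDiffOn_const
    contDiffOn_const)

theorem gam_smooth (hL : IsPseudoFinsler Ω A L) (hV : LAdmissible A Ω V) :
    ContDiffOn ℝ (⊤ : ℕ∞) (Gam L V) Ω := by
  unfold Gam
  apply ContDiffOn.sum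
  intro i _
  apply ContDiffOn.sum
  intro j _
  have hEEc : ContDiff ℝ (⊤ : ℕ∞) (EE (n := n) i j) := (EE (n := n) i j).contDiff
  have := hEEc.comp_contDiffOn (smooth_Gfij hL hV i j)
  simpa [Function.comp_def] using this

end Smooth

end ChernAux
namespace ChernAux

open ContinuousLinearMap

variable {n : ℕ}

section Main

variable {Ω : Set (Vec n)} {A : Set (Vec n × Vec n)} {L : Vec n × Vec n → ℝ}
  {V : Vec n → Vec n}

theorem gam_tf (hL : IsPseudoFinsler Ω A L) (hV : LAdmissible A Ω V) :
    TorsionFree Ω (Gam L V) := by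
  intro x hx u w
  rw [Gam_eq_Gf, Gam_eq_Gf, Gf_symm hL hV hx]

theorem gam_compat (hL : IsPseudoFinsler Ω A L) (hV : LAdmissible A Ω V) :
    AlmostGCompatible L Ω (Gam L V) V := by
  intro X Y Z hX hY hZ x hx
  have hxA : (x, V x) ∈ A := hV.2 x hx
  rw [fderiv_g_formula hL hV hY hZ hx (X x)]
  unfold nablaVF
  rw [gF_eq hL hxA, gF_eq hL hxA, CartanF_eq hL hxA]
  rw [Gam_eq_Gf, Gam_eq_Gf, Gam_eq_Gf]
  rw [gB_add_left, gB_add_right, CB_add1]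
  have hmain := main_id hL hV hx (X x) (Y x) (Z x)
  have hsym := gB_symm hL hxA (Y x) (Gf L V x (X x) (Z x))
  linarith

theorem gam_unique (hL : IsPseudoFinsler Ω A L) (hV : LAdmissible A Ω V)
    {Γ' : Vec n → Bil n} (hTF : TorsionFree Ω Γ') (hAG : AlmostGCompatible L Ω Γ' V)
    {x : Vec n} (hx : x ∈ Ω) : Γ' x = Gam L V x := by
  have hxA : (x, V x) ∈ A := hV.2 x hx
  have hE : ∀ u w z : Vec n,
      gB L (x, V x) (Γ' x u w - Gam L V x u w) z
        + gB L (x, V x) (Γ' x u z - Gam L V x u z) w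
        + 2 * CB L (x, V x) (Γ' x u (V x) - Gam L V x u (V x)) w z = 0 := by
    intro u w z
    have h1 := hAG (fun _ => u) (fun _ => w) (fun _ => z)
      contDiffOn_const contDiffOn_const contDiffOn_const x hx
    have h2 := (gam_compat hL hV) (fun _ => u) (fun _ => w) (fun _ => z)
      contDiffOn_const contDiffOn_const contDiffOn_const x hx
    simp only [nablaVF, fderiv_const, fderiv_fun_const, ContinuousLinearMap.zero_apply, zero_add,
      Pi.zero_apply] at h1 h2
    rw [gF_eq hL hxA, gF_eq hL hxA, CartanF_eq hL hxA] at h1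
    rw [gF_eq hL hxA, gF_eq hL hxA, CartanF_eq hL hxA] at h2
    have t1 := gB_sub_left (L := L) (p := (x, V x)) (Γ' x u w) (Gam L V x u w) z
    have t2l := gB_sub_right (L := L) (p := (x, V x)) w (Γ' x u z) (Gam L V x u z)
    have t2s := gB_symm hL hxA w (Γ' x u z - Gam L V x u z)
    have t3 := CB_add1 (L := L) (p := (x, V x)) (fderiv ℝ V x u) (Γ' x u (V x)) w z
    have t4 := CB_add1 (L := L) (p := (x, V x)) (fderiv ℝ V x u) (Gam L V x u (V x)) w z
    have t5 := CB_sub1 (L := L) (p := (x, V x)) (Γ' x u (V x)) (Gam L V x u (V x)) w z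
    linarith
  have hDsymm : ∀ u w, Γ' x u w - Gam L V x u w = Γ' x w u - Gam L V x w u := by
    intro u w
    rw [hTF x hx u w, gam_tf hL hV x hx u w]
  have hF : ∀ u w z : Vec n,
      gB L (x, V x) (Γ' x u w - Gam L V x u w) z
        + CB L (x, V x) (Γ' x u (V x) - Gam L V x u (V x)) w z
        + CB L (x, V x) (Γ' x w (V x) - Gam L V x w (V x)) z u
        - CB L (x, V x) (Γ' x z (V x) - Gam L V x z (V x)) u w = 0 := by
    intro u w z
    have e1 := hE u w z
    have e2 := hE w z u
    have e3 := hE z u w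
    rw [hDsymm w u] at e2
    rw [hDsymm z u, hDsymm z w] at e3
    linarith
  have hDvv : Γ' x (V x) (V x) - Gam L V x (V x) (V x) = 0 := by
    apply gB_nondeg hL hxA
    intro z
    have h := hF (V x) (V x) z
    have c1 := CB_v2 hL hxA (Γ' x (V x) (V x) - Gam L V x (V x) (V x)) z
    have c2 := CB_v3 hL hxA (Γ' x (V x) (V x) - Gam L V x (V x) (V x)) z
    have c3 := CB_v2 hL hxA (Γ' x z (V x) - Gam L V x z (V x)) (V x)
    simp only at c1 c2 c3
    linarith
  have hDuv : ∀ u, Γ' x u (V x) - Gam L V x u (V x) = 0 := by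
    intro u
    apply gB_nondeg hL hxA
    intro z
    have h := hF u (V x) z
    have c1 := CB_v2 hL hxA (Γ' x u (V x) - Gam L V x u (V x)) z
    have c2 := CB_v3 hL hxA (Γ' x z (V x) - Gam L V x z (V x)) u
    simp only at c1 c2
    rw [hDvv, CB_zero1] at h
    linarith
  have hDuw : ∀ u w, Γ' x u w - Gam L V x u w = 0 := by
    intro u w
    apply gB_nondeg hL hxA
    intro z
    have h := hF u w z
    rw [hDuv u, hDuv w, hDuv z, CB_zero1, CB_zero1, CB_zero1] at h
    linarith
  apply ContinuousLinearMap.ext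
  intro u
  apply ContinuousLinearMap.ext
  intro w
  have := hDuw u w
  exact sub_eq_zero.mp this

end Main

end ChernAux

/-- Existence and uniqueness (on `Ω`) of a torsion-free, almost `g`-compatible
connection datum with reference an `L`-admissible vector field `V`; moreover it is smooth. -/
theorem chern_connection_exists_unique {n : ℕ} (hn : 1 ≤ n)
    (Ω : Set (Vec n)) (A : Set (Vec n × Vec n)) (L : Vec n × Vec n → ℝ)
    (hL : IsPseudoFinsler Ω A L) (V : Vec n → Vec n) (hV : LAdmissible A Ω V) :
    ∃ Γ : Vec n → Bil n,
      (TorsionFree Ω Γ ∧ AlmostGCompatible L Ω Γ V ∧ ContDiffOn ℝ (⊤ : ℕ∞) Γ Ω) ∧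
      ∀ Γ' : Vec n → Bil n, TorsionFree Ω Γ' → AlmostGCompatible L Ω Γ' V →
        ∀ x ∈ Ω, Γ' x = Γ x := by
  refine ⟨ChernAux.Gam L V, ⟨ChernAux.gam_tf hL hV, ChernAux.gam_compat hL hV,
    ChernAux.gam_smooth hL hV⟩, ?_⟩
  intro Γ' h1 h2 x hx
  exact ChernAux.gam_unique hL hV h1 h2 hx
end
end

section
/- Let L be a pseudo-Finsler metric on a conic domain A over Ω ⊆ ℝⁿ, let V be an L-admissible smooth vector field on Ω, and let Γ be a torsion-free connection datum that is almost g-compatible with reference V, with associated connection ∇ = ∇^V. Then ∇ satisfies the Koszul-type formula: for all smooth vector fields X, Y, Z on Ω and all x ∈ Ω, 2 g_V(∇_X Y, Z) = X(g_V(Y,Z)) − Z(g_V(X,Y)) + Y(g_V(Z,X)) + g_V([X,Y],Z) + g_V([Z,X],Y) − g_V([Y,Z],X) + 2(−C_V(∇_X V, Y, Z) − C_V(∇_Y V, Z, X) + C_V(∇_Z V, X, Y)), where g_V(·,·)(x) := g_{(x,V(x))}(·,·), C_V(·,·,·)(x) := C_{(x,V(x))}(·,·,·), X(f) denotes the directional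 derivative of f in direction X(x), and [X,Y](x) := (dY)_x(X(x)) − (dX)_x(Y(x)). -/
noncomputable section

open scoped Topology

/-- The Koszul-type formula for a torsion-free, almost `g`-compatible
connection datum `Γ` with reference `V`. -/
theorem koszul_formula {n : ℕ} (hn : 1 ≤ n)
    (Ω : Set (Vec n)) (A : Set (Vec n × Vec n)) (L : Vec n × Vec n → ℝ)
    (hL : IsPseudoFinsler Ω A L) (V : Vec n → Vec n) (hV : LAdmissible A Ω V)
    (Γ : Vec n → Bil n) (hTF : TorsionFree Ω Γ) (hAC : AlmostGCompatible L Ω Γ V) :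
    ∀ X Y Z : Vec n → Vec n,
      ContDiffOn ℝ (⊤ : ℕ∞) X Ω → ContDiffOn ℝ (⊤ : ℕ∞) Y Ω → ContDiffOn ℝ (⊤ : ℕ∞) Z Ω →
      ∀ x ∈ Ω,
        2 * gF L x (V x) (nablaVF Γ X Y x) (Z x) =
          fderiv ℝ (fun y => gF L y (V y) (Y y) (Z y)) x (X x)
            - fderiv ℝ (fun y => gF L y (V y) (X y) (Y y)) x (Z x)
            + fderiv ℝ (fun y => gF L y (V y) (Z y) (X y)) x (Y x)
            + gF L x (V x) (lieVF X Y x) (Z x)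
            + gF L x (V x) (lieVF Z X x) (Y x)
            - gF L x (V x) (lieVF Y Z x) (X x)
            + 2 * (- CartanF L x (V x) (nablaVF Γ X V x) (Y x) (Z x)
                   - CartanF L x (V x) (nablaVF Γ Y V x) (Z x) (X x)
                   + CartanF L x (V x) (nablaVF Γ Z V x) (X x) (Y x)) := by
  intro X Y Z hX hY hZ x hx
  have hp : (x, V x) ∈ A := hV.2 x hx
  have hsym : ∀ u w, gF L x (V x) u w = gF L x (V x) w u := hL.g_symm (x, V x) hp
  have hadd : ∀ u₁ u₂ w, gF L x (V x) (u₁ + u₂) w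
      = gF L x (V x) u₁ w + gF L x (V x) u₂ w := hL.g_add_left (x, V x) hp
  have hsub : ∀ u w z, gF L x (V x) (u - w) z
      = gF L x (V x) u z - gF L x (V x) w z := by
    intro u w z
    have h := hadd (u - w) w z
    rw [sub_add_cancel] at h
    linarith
  have hlie : ∀ P Q : Vec n → Vec n,
      lieVF P Q x = nablaVF Γ P Q x - nablaVF Γ Q P x := by
    intro P Q
    simp only [lieVF, nablaVF, hTF x hx (P x) (Q x)]
    abel
  rw [hAC X Y Z hX hY hZ x hx, hAC Z X Y hZ hX hY x hx, hAC Y Z X hY hZ hX x hx,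
    hlie X Y, hlie Z X, hlie Y Z, hsub, hsub, hsub]
  have h1 := hsym (Y x) (nablaVF Γ X Z x)
  have h2 := hsym (X x) (nablaVF Γ Z Y x)
  have h3 := hsym (Z x) (nablaVF Γ Y X x)
  linarith
end
end

section
/- Let L be a pseudo-Finsler metric on a conic domain A over Ω ⊆ ℝⁿ, let V be an L-admissible smooth vector field on Ω, and let λ > 0. If Γ₁ is a torsion-free connection datum that is almost g-compatible with reference V, and Γ₂ is a torsion-free connection datum that is almost g-compatible with reference the L-admissible field λ·V, then Γ₁ = Γ₂ (the connection is positively homogeneous of degree 0 in the reference vector field). -/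
noncomputable section

open scoped Topology

section ChernHelpers

open scoped ContDiff
open Filter

private lemma deriv_comp_mul (h : ℝ → ℝ) (c : ℝ) :
    deriv (fun t : ℝ => h (c * t)) 0 = c * deriv h 0 := by
  rcases eq_or_ne c 0 with rfl | hc
  · simp
  · by_cases hd : DifferentiableAt ℝ h 0
    · have h1 : HasDerivAt (fun t : ℝ => h (c * t)) (deriv h 0 * c) 0 := by
        have hd0 : HasDerivAt h (deriv h 0) ((fun t : ℝ => c * t) 0) := by
          rw [show (fun t : ℝ => c * t) 0 = (0:ℝ) by simp]; exact hd.hasDerivAt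
        simpa [Function.comp_def] using hd0.comp 0 ((hasDerivAt_id (0:ℝ)).const_mul c)
      rw [h1.deriv]; ring
    · have hd2 : ¬ DifferentiableAt ℝ (fun t : ℝ => h (c * t)) 0 := by
        intro hcon
        apply hd
        have h3 : DifferentiableAt ℝ (fun t : ℝ => h (c * (c⁻¹ * t))) 0 := by
          have hcon' : DifferentiableAt ℝ (fun t : ℝ => h (c * t)) ((fun t : ℝ => c⁻¹ * t) 0) := by
            rw [show (fun t : ℝ => c⁻¹ * t) 0 = (0:ℝ) by simp]; exact hcon
          simpa [Function.comp_def] using hcon'.comp 0 (differentiableAt_id.const_mul c⁻¹)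
        have : (fun t : ℝ => h (c * (c⁻¹ * t))) = h := by
          funext t; rw [← mul_assoc, mul_inv_cancel₀ hc, one_mul]
        rwa [this] at h3
      rw [deriv_zero_of_not_differentiableAt hd, deriv_zero_of_not_differentiableAt hd2,
        mul_zero]

private lemma hasDerivAt_line {n : ℕ} {φ : Vec n → ℝ} {w : Vec n}
    (hφ : DifferentiableAt ℝ φ w) (z : Vec n) :
    HasDerivAt (fun t : ℝ => φ (w + t • z)) (fderiv ℝ φ w z) 0 := by
  have hline : HasDerivAt (fun t : ℝ => w + t • z) z 0 := by
    simpa using ((hasDerivAt_id (0:ℝ)).smul_const z).const_add w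
  have hφ' : HasFDerivAt φ (fderiv ℝ φ w) (w + (0:ℝ) • z) := by
    rw [show w + (0:ℝ) • z = w by simp]; exact hφ.hasFDerivAt
  simpa [Function.comp_def] using hφ'.comp_hasDerivAt 0 hline

private lemma deriv_line {n : ℕ} {φ : Vec n → ℝ} {w : Vec n}
    (hφ : DifferentiableAt ℝ φ w) (z : Vec n) :
    deriv (fun t : ℝ => φ (w + t • z)) 0 = fderiv ℝ φ w z :=
  (hasDerivAt_line hφ z).deriv

variable {n : ℕ} {Ω : Set (Vec n)} {A : Set (Vec n × Vec n)} {L : Vec n × Vec n → ℝ}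

private lemma slice_open (hA : IsOpen A) (x : Vec n) : IsOpen {w : Vec n | (x, w) ∈ A} :=
  hA.preimage (continuous_const.prodMk continuous_id)

private lemma slice_smooth (hL : IsPseudoFinsler Ω A L) (x : Vec n) :
    ContDiffOn ℝ ∞ (fun w => L (x, w)) {w : Vec n | (x, w) ∈ A} :=
  hL.smooth.comp ((contDiff_const.prodMk contDiff_id).contDiffOn) (fun _ hw => hw)

private lemma F1_smooth (hL : IsPseudoFinsler Ω A L) (x : Vec n) (z : Vec n) :
    ContDiffOn ℝ ∞ (fun p => fderiv ℝ (fun q => L (x, q)) p z) {w : Vec n | (x, w) ∈ A} :=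
  (((slice_smooth hL x).fderiv_of_isOpen (slice_open hL.isOpen_dom x)
      (le_of_eq (show (∞ : WithTop ℕ∞) + 1 = ∞ from rfl))).clm_apply
    contDiffOn_const)

private lemma gF_eq_fderiv2 (hL : IsPseudoFinsler Ω A L) {x w : Vec n} (hw : (x, w) ∈ A)
    (u z : Vec n) :
    gF L x w u z
      = (1 / 2) * fderiv ℝ (fun p => fderiv ℝ (fun q => L (x, q)) p z) w u := by
  have hs : IsOpen {w : Vec n | (x, w) ∈ A} := slice_open hL.isOpen_dom x
  have hf := slice_smooth hL x
  have hev : (fun t : ℝ => deriv (fun s : ℝ => L (x, w + t • u + s • z)) 0)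
      =ᶠ[𝓝 (0:ℝ)] fun t : ℝ => fderiv ℝ (fun q => L (x, q)) (w + t • u) z := by
    have hmem : {t : ℝ | w + t • u ∈ {w : Vec n | (x, w) ∈ A}} ∈ 𝓝 (0:ℝ) := by
      have hc : Continuous fun t : ℝ => w + t • u :=
        continuous_const.add (continuous_id.smul continuous_const)
      apply (hc.continuousAt (x := (0:ℝ))).preimage_mem_nhds
      rw [show w + (0:ℝ) • u = w by simp]
      exact hs.mem_nhds hw
    filter_upwards [hmem] with t ht
    exact deriv_line ((hf.contDiffAt (hs.mem_nhds ht)).differentiableAt (by simp)) z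
  rw [gF, hev.deriv_eq]
  have hd : DifferentiableAt ℝ (fun p => fderiv ℝ (fun q => L (x, q)) p z) w :=
    ((F1_smooth hL x z).contDiffAt (hs.mem_nhds hw)).differentiableAt (by norm_num)
  rw [deriv_line hd u]

private lemma gF_contDiffOn (hL : IsPseudoFinsler Ω A L) (x u z : Vec n) :
    ContDiffOn ℝ ∞ (fun w => gF L x w u z) {w : Vec n | (x, w) ∈ A} := by
  have hs : IsOpen {w : Vec n | (x, w) ∈ A} := slice_open hL.isOpen_dom x
  have hsm : ContDiffOn ℝ ∞ (fun w =>
      (1 / 2) * fderiv ℝ (fun p => fderiv ℝ (fun q => L (x, q)) p z) w u)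
      {w : Vec n | (x, w) ∈ A} := by
    have h2 := ((F1_smooth hL x z).fderiv_of_isOpen hs
      (le_of_eq (show (∞ : WithTop ℕ∞) + 1 = ∞ from rfl))).clm_apply
      (contDiffOn_const (c := u))
    exact contDiffOn_const.mul h2
  exact hsm.congr (fun w hw => gF_eq_fderiv2 hL hw u z)

private lemma gF_diffAt (hL : IsPseudoFinsler Ω A L) {x v : Vec n} (hv : (x, v) ∈ A)
    (u z : Vec n) :
    DifferentiableAt ℝ (fun w => gF L x w u z) v :=
  ((gF_contDiffOn hL x u z).contDiffAt
    ((slice_open hL.isOpen_dom x).mem_nhds hv)).differentiableAt (by norm_num)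

private lemma cartan_bridge (L : Vec n × Vec n → ℝ) (x v w₁ w₂ w₃ : Vec n) :
    CartanF L x v w₁ w₂ w₃ = (1 / 2) * deriv (fun s : ℝ => gF L x (v + s • w₁) w₂ w₃) 0 := by
  simp only [CartanF, gF]
  rw [deriv_const_mul_field]
  ring

private lemma cartan_eq_fderiv (hL : IsPseudoFinsler Ω A L) {x v : Vec n} (hv : (x, v) ∈ A)
    (a y z : Vec n) :
    CartanF L x v a y z = (1 / 2) * fderiv ℝ (fun w => gF L x w y z) v a := by
  rw [cartan_bridge, deriv_line (gF_diffAt hL hv y z) a]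

private lemma cartan_smul1 (hL : IsPseudoFinsler Ω A L) {x v : Vec n} (hv : (x, v) ∈ A)
    (c : ℝ) (a y z : Vec n) :
    CartanF L x v (c • a) y z = c * CartanF L x v a y z := by
  rw [cartan_eq_fderiv hL hv, cartan_eq_fderiv hL hv, map_smul]
  simp [smul_eq_mul]; ring

private lemma cartan_sub1 (hL : IsPseudoFinsler Ω A L) {x v : Vec n} (hv : (x, v) ∈ A)
    (a b y z : Vec n) :
    CartanF L x v (a - b) y z = CartanF L x v a y z - CartanF L x v b y z := by
  rw [cartan_eq_fderiv hL hv, cartan_eq_fderiv hL hv, cartan_eq_fderiv hL hv, map_sub]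
  ring

private lemma cartan_symm23 (hL : IsPseudoFinsler Ω A L) {x v : Vec n} (hv : (x, v) ∈ A)
    (a y z : Vec n) :
    CartanF L x v a y z = CartanF L x v a z y := by
  rw [cartan_bridge, cartan_bridge]
  have hs : IsOpen {w : Vec n | (x, w) ∈ A} := slice_open hL.isOpen_dom x
  have hmem : {s : ℝ | v + s • a ∈ {w : Vec n | (x, w) ∈ A}} ∈ 𝓝 (0:ℝ) := by
    have hc : Continuous fun s : ℝ => v + s • a :=
      continuous_const.add (continuous_id.smul continuous_const)
    apply (hc.continuousAt (x := (0:ℝ))).preimage_mem_nhds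
    rw [show v + (0:ℝ) • a = v by simp]
    exact hs.mem_nhds hv
  have hev : (fun s : ℝ => gF L x (v + s • a) y z)
      =ᶠ[𝓝 (0:ℝ)] fun s : ℝ => gF L x (v + s • a) z y := by
    filter_upwards [hmem] with s hsa
    exact hL.g_symm (x, v + s • a) hsa y z
  rw [hev.deriv_eq]

private lemma gF_homog (hL : IsPseudoFinsler Ω A L) {x v : Vec n} (hv : (x, v) ∈ A)
    {lam : ℝ} (hlam : 0 < lam) (u z : Vec n) :
    gF L x (lam • v) u z = gF L x v u z := by
  have hlam' : lam ≠ 0 := ne_of_gt hlam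
  have hs : IsOpen {w : Vec n | (x, w) ∈ A} := slice_open hL.isOpen_dom x
  have hev : (fun t : ℝ => deriv (fun s : ℝ => L (x, lam • v + t • u + s • z)) 0)
      =ᶠ[𝓝 (0:ℝ)] fun t : ℝ =>
        lam * (fun r : ℝ => deriv (fun s : ℝ => L (x, v + r • u + s • z)) 0) (lam⁻¹ * t) := by
    have hmem : {t : ℝ | v + (lam⁻¹ * t) • u ∈ {w : Vec n | (x, w) ∈ A}} ∈ 𝓝 (0:ℝ) := by
      have hc : Continuous fun t : ℝ => v + (lam⁻¹ * t) • u :=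
        continuous_const.add (((continuous_const).mul continuous_id).smul continuous_const)
      apply (hc.continuousAt (x := (0:ℝ))).preimage_mem_nhds
      rw [show v + (lam⁻¹ * (0:ℝ)) • u = v by simp]
      exact hs.mem_nhds hv
    filter_upwards [hmem] with t ht
    have hmem2 : {s : ℝ | v + (lam⁻¹ * t) • u + (lam⁻¹ * s) • z
        ∈ {w : Vec n | (x, w) ∈ A}} ∈ 𝓝 (0:ℝ) := by
      have hc : Continuous fun s : ℝ => v + (lam⁻¹ * t) • u + (lam⁻¹ * s) • z :=
        continuous_const.add (((continuous_const).mul continuous_id).smul continuous_const)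
      apply (hc.continuousAt (x := (0:ℝ))).preimage_mem_nhds
      rw [show v + (lam⁻¹ * t) • u + (lam⁻¹ * (0:ℝ)) • z = v + (lam⁻¹ * t) • u by simp]
      exact hs.mem_nhds ht
    have hev2 : (fun s : ℝ => L (x, lam • v + t • u + s • z))
        =ᶠ[𝓝 (0:ℝ)] fun s : ℝ =>
          lam ^ 2 * (fun r : ℝ => L (x, v + (lam⁻¹ * t) • u + r • z)) (lam⁻¹ * s) := by
      filter_upwards [hmem2] with s hsmem
      have hveceq : lam • (v + (lam⁻¹ * t) • u + (lam⁻¹ * s) • z)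
          = lam • v + t • u + s • z := by
        rw [smul_add, smul_add, smul_smul, smul_smul, ← mul_assoc, ← mul_assoc,
          mul_inv_cancel₀ hlam', one_mul, one_mul]
      have := hL.homogeneous (x, v + (lam⁻¹ * t) • u + (lam⁻¹ * s) • z) hsmem lam hlam
      simp only at this
      rw [← hveceq, this]
    rw [hev2.deriv_eq, deriv_const_mul_field,
      deriv_comp_mul (fun r : ℝ => L (x, v + (lam⁻¹ * t) • u + r • z)) lam⁻¹]
    field_simp
  rw [gF, gF, hev.deriv_eq, deriv_const_mul_field,
    deriv_comp_mul (fun r : ℝ => deriv (fun s : ℝ => L (x, v + r • u + s • z)) 0) lam⁻¹]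
  field_simp

private lemma cartan_homog (hL : IsPseudoFinsler Ω A L) {x v : Vec n} (hv : (x, v) ∈ A)
    {lam : ℝ} (hlam : 0 < lam) (a y z : Vec n) :
    CartanF L x (lam • v) a y z = lam⁻¹ * CartanF L x v a y z := by
  have hlam' : lam ≠ 0 := ne_of_gt hlam
  have hs : IsOpen {w : Vec n | (x, w) ∈ A} := slice_open hL.isOpen_dom x
  rw [cartan_bridge, cartan_bridge]
  have hmem : {s : ℝ | v + (lam⁻¹ * s) • a ∈ {w : Vec n | (x, w) ∈ A}} ∈ 𝓝 (0:ℝ) := by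
    have hc : Continuous fun s : ℝ => v + (lam⁻¹ * s) • a :=
      continuous_const.add (((continuous_const).mul continuous_id).smul continuous_const)
    apply (hc.continuousAt (x := (0:ℝ))).preimage_mem_nhds
    rw [show v + (lam⁻¹ * (0:ℝ)) • a = v by simp]
    exact hs.mem_nhds hv
  have hev : (fun s : ℝ => gF L x (lam • v + s • a) y z)
      =ᶠ[𝓝 (0:ℝ)] fun s : ℝ =>
        (fun r : ℝ => gF L x (v + r • a) y z) (lam⁻¹ * s) := by
    filter_upwards [hmem] with s hsm
    have hveceq : lam • (v + (lam⁻¹ * s) • a) = lam • v + s • a := by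
      rw [smul_add, smul_smul, ← mul_assoc, mul_inv_cancel₀ hlam', one_mul]
    show gF L x (lam • v + s • a) y z = gF L x (v + (lam⁻¹ * s) • a) y z
    rw [← hveceq, gF_homog hL hsm hlam y z]
  rw [hev.deriv_eq, deriv_comp_mul (fun r : ℝ => gF L x (v + r • a) y z) lam⁻¹]
  ring


private lemma gF_base (hL : IsPseudoFinsler Ω A L) {x w : Vec n} (hw : (x, w) ∈ A)
    (z : Vec n) :
    gF L x w w z = (1 / 2) * deriv (fun r : ℝ => L (x, w + r • z)) 0 := by
  have hs : IsOpen {w : Vec n | (x, w) ∈ A} := slice_open hL.isOpen_dom x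
  have hev : (fun t : ℝ => deriv (fun s : ℝ => L (x, w + t • w + s • z)) 0)
      =ᶠ[𝓝 (0:ℝ)] fun t : ℝ => (1 + t) * deriv (fun r : ℝ => L (x, w + r • z)) 0 := by
    have hmem : {t : ℝ | -1 < t} ∈ 𝓝 (0:ℝ) :=
      (isOpen_Ioi).mem_nhds (by norm_num)
    filter_upwards [hmem] with t ht
    have h1t : (0:ℝ) < 1 + t := by linarith [ht]
    have h1t' : (1:ℝ) + t ≠ 0 := ne_of_gt h1t
    have hmem2 : {s : ℝ | w + ((1 + t)⁻¹ * s) • z ∈ {w : Vec n | (x, w) ∈ A}}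
        ∈ 𝓝 (0:ℝ) := by
      have hc : Continuous fun s : ℝ => w + ((1 + t)⁻¹ * s) • z :=
        continuous_const.add (((continuous_const).mul continuous_id).smul continuous_const)
      apply (hc.continuousAt (x := (0:ℝ))).preimage_mem_nhds
      rw [show w + ((1 + t)⁻¹ * (0:ℝ)) • z = w by simp]
      exact hs.mem_nhds hw
    have hev2 : (fun s : ℝ => L (x, w + t • w + s • z))
        =ᶠ[𝓝 (0:ℝ)] fun s : ℝ =>
          (1 + t) ^ 2 * (fun r : ℝ => L (x, w + r • z)) ((1 + t)⁻¹ * s) := by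
      filter_upwards [hmem2] with s hsmem
      have hveceq : (1 + t) • (w + ((1 + t)⁻¹ * s) • z) = w + t • w + s • z := by
        rw [smul_add, smul_smul, ← mul_assoc, mul_inv_cancel₀ h1t', one_mul, add_smul,
          one_smul, add_assoc, add_comm (t • w), ← add_assoc]
      have := hL.homogeneous (x, w + ((1 + t)⁻¹ * s) • z) hsmem (1 + t) h1t
      simp only at this
      rw [← hveceq, this]
    rw [hev2.deriv_eq, deriv_const_mul_field,
      deriv_comp_mul (fun r : ℝ => L (x, w + r • z)) (1 + t)⁻¹]
    field_simp
  rw [gF, hev.deriv_eq]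
  have hder : HasDerivAt (fun t : ℝ => (1 + t) * deriv (fun r : ℝ => L (x, w + r • z)) 0)
      (deriv (fun r : ℝ => L (x, w + r • z)) 0) 0 := by
    simpa using (((hasDerivAt_id (0:ℝ)).const_add 1).mul_const
      (deriv (fun r : ℝ => L (x, w + r • z)) 0))
  rw [hder.deriv]

private lemma cartan_euler2 (hL : IsPseudoFinsler Ω A L) {x v : Vec n} (hv : (x, v) ∈ A)
    (a z : Vec n) :
    CartanF L x v a v z = 0 := by
  have hs : IsOpen {w : Vec n | (x, w) ∈ A} := slice_open hL.isOpen_dom x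
  have hmem : {s : ℝ | v + s • a ∈ {w : Vec n | (x, w) ∈ A}} ∈ 𝓝 (0:ℝ) := by
    have hc : Continuous fun s : ℝ => v + s • a :=
      continuous_const.add (continuous_id.smul continuous_const)
    apply (hc.continuousAt (x := (0:ℝ))).preimage_mem_nhds
    rw [show v + (0:ℝ) • a = v by simp]
    exact hs.mem_nhds hv
  -- β : second coefficient
  set β : ℝ → ℝ := fun r : ℝ => gF L x (v + r • a) a z with hβ
  have hβd : DifferentiableAt ℝ β 0 := by
    have := (hasDerivAt_line (gF_diffAt hL hv a z) a).differentiableAt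
    simpa [hβ] using this
  -- φ : the first-derivative function
  set φ : ℝ → ℝ := fun r : ℝ => fderiv ℝ (fun q => L (x, q)) (v + r • a) z with hφ
  have hφd : DifferentiableAt ℝ φ 0 := by
    have hF1 : DifferentiableAt ℝ (fun p => fderiv ℝ (fun q => L (x, q)) p z) v :=
      ((F1_smooth hL x z).contDiffAt (hs.mem_nhds hv)).differentiableAt (by norm_num)
    have := (hasDerivAt_line hF1 a).differentiableAt
    simpa [hφ] using this
  have hφderiv : deriv φ 0 = 2 * gF L x v a z := by
    have hF1 : DifferentiableAt ℝ (fun p => fderiv ℝ (fun q => L (x, q)) p z) v :=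
      ((F1_smooth hL x z).contDiffAt (hs.mem_nhds hv)).differentiableAt (by norm_num)
    have h1 : deriv φ 0 = fderiv ℝ (fun p => fderiv ℝ (fun q => L (x, q)) p z) v a :=
      (hasDerivAt_line hF1 a).deriv
    rw [h1, gF_eq_fderiv2 hL hv a z]; ring
  -- key pointwise identity
  have hkey : (fun r : ℝ => gF L x (v + r • a) v z)
      =ᶠ[𝓝 (0:ℝ)] fun r : ℝ => (1 / 2) * φ r - r * β r := by
    filter_upwards [hmem] with r hr
    have hsplit : gF L x (v + r • a) (v + r • a) z
        = gF L x (v + r • a) v z + r * gF L x (v + r • a) a z := by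
      have h1 := hL.g_add_left (x, v + r • a) hr v (r • a) z
      have h2 := hL.g_smul_left (x, v + r • a) hr r a z
      simp only at h1 h2
      rw [h1, h2]
    have hbase := gF_base hL hr z
    have hφr : φ r = deriv (fun q : ℝ => L (x, v + r • a + q • z)) 0 := by
      rw [hφ]
      exact (deriv_line ((slice_smooth hL x).contDiffAt (hs.mem_nhds hr)
        |>.differentiableAt (by simp)) z).symm
    rw [hφr]
    rw [hbase] at hsplit
    rw [hβ]
    simp only
    linarith [hsplit]
  -- compute the derivative
  have hd1 : DifferentiableAt ℝ (fun r : ℝ => (1 / 2) * φ r) 0 := hφd.const_mul _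
  have hd2 : HasDerivAt (fun r : ℝ => r * β r) (β 0) 0 := by
    have := (hasDerivAt_id (0:ℝ)).fun_mul hβd.hasDerivAt
    simpa using this
  have hederiv : deriv (fun r : ℝ => gF L x (v + r • a) v z) 0 = 0 := by
    rw [hkey.deriv_eq, deriv_fun_sub hd1 hd2.differentiableAt, deriv_const_mul_field, hφderiv,
      hd2.deriv]
    have : β 0 = gF L x v a z := by rw [hβ]; simp
    rw [this]; ring
  rw [cartan_bridge, hederiv, mul_zero]

private lemma cartan_euler3 (hL : IsPseudoFinsler Ω A L) {x v : Vec n} (hv : (x, v) ∈ A)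
    (a y : Vec n) :
    CartanF L x v a y v = 0 := by
  rw [← cartan_symm23 hL hv a v y]  -- wrong direction? adjust
  exact cartan_euler2 hL hv a y


private lemma cartan_zero1 (hL : IsPseudoFinsler Ω A L) {x v : Vec n} (hv : (x, v) ∈ A)
    (y z : Vec n) :
    CartanF L x v 0 y z = 0 := by
  have := cartan_smul1 hL hv 0 0 y z
  simpa using this

end ChernHelpers


/-- The Chern connection is positively homogeneous of degree 0 in the reference
vector field: the connection data with references `V` and `λ·V` coincide on `Ω`. -/

theorem chern_connection_homogeneous {n : ℕ} (hn : 1 ≤ n)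
    (Ω : Set (Vec n)) (A : Set (Vec n × Vec n)) (L : Vec n × Vec n → ℝ)
    (hL : IsPseudoFinsler Ω A L) (V : Vec n → Vec n) (hV : LAdmissible A Ω V)
    (lam : ℝ) (hlam : 0 < lam)
    (Γ₁ : Vec n → Bil n) (hTF₁ : TorsionFree Ω Γ₁) (hAC₁ : AlmostGCompatible L Ω Γ₁ V)
    (Γ₂ : Vec n → Bil n) (hTF₂ : TorsionFree Ω Γ₂)
    (hAC₂ : AlmostGCompatible L Ω Γ₂ (fun x => lam • V x)) :
    ∀ x ∈ Ω, Γ₁ x = Γ₂ x := by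
  intro x hx
  have hxA : (x, V x) ∈ A := hV.2 x hx
  have hVd : DifferentiableAt ℝ V x :=
    (hV.1.contDiffAt (hL.isOpen_base.mem_nhds hx)).differentiableAt (by simp)
  -- pointwise bilinear-algebra facts for g at (x, V x)
  have gsymm : ∀ a b : Vec n, gF L x (V x) a b = gF L x (V x) b a :=
    fun a b => hL.g_symm (x, V x) hxA a b
  have gsub : ∀ a b z : Vec n,
      gF L x (V x) (a - b) z = gF L x (V x) a z - gF L x (V x) b z := by
    intro a b z
    have h1 := hL.g_add_left (x, V x) hxA (a - b) b z
    simp only [sub_add_cancel] at h1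
    linarith
  have hnd : ∀ a : Vec n, (∀ w, gF L x (V x) a w = 0) → a = 0 :=
    fun a h => hL.g_nondeg (x, V x) hxA a h
  -- the difference tensor
  set D : Vec n → Vec n → Vec n := fun a b => Γ₁ x a b - Γ₂ x a b with hD
  have hDsymm : ∀ a b : Vec n, D a b = D b a := by
    intro a b
    simp only [hD, hTF₁ x hx a b, hTF₂ x hx a b]
  -- the compatibility difference identity
  have key : ∀ u y z : Vec n,
      gF L x (V x) (D u y) z + gF L x (V x) (D u z) y
        + 2 * CartanF L x (V x) (D u (V x)) y z = 0 := by
    intro u y z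
    have h1 := hAC₁ (fun _ => u) (fun _ => y) (fun _ => z)
      contDiffOn_const contDiffOn_const contDiffOn_const x hx
    have h2 := hAC₂ (fun _ => u) (fun _ => y) (fun _ => z)
      contDiffOn_const contDiffOn_const contDiffOn_const x hx
    simp only [nablaVF, fderiv_const_apply, ContinuousLinearMap.zero_apply, zero_add] at h1 h2
    -- the two left-hand sides agree
    have hLHS : fderiv ℝ (fun p => gF L p (lam • V p) y z) x
        = fderiv ℝ (fun p => gF L p (V p) y z) x := by
      apply Filter.EventuallyEq.fderiv_eq
      filter_upwards [hL.isOpen_base.mem_nhds hx] with p hp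
      exact gF_homog hL (hV.2 p hp) hlam y z
    rw [hLHS] at h2
    -- rewrite the reference vector field terms in h2
    have hfd : fderiv ℝ (fun p => lam • V p) x = lam • fderiv ℝ V x :=
      fderiv_const_smul hVd lam
    rw [hfd] at h2
    have hsm : (lam • fderiv ℝ V x) u + (Γ₂ x) u (lam • V x)
        = lam • (fderiv ℝ V x u + (Γ₂ x) u (V x)) := by
      rw [smul_add]
      congr 1
      exact ((Γ₂ x) u).map_smul lam (V x)
    rw [hsm] at h2
    rw [gF_homog hL hxA hlam ((Γ₂ x) u y) z, gF_homog hL hxA hlam y ((Γ₂ x) u z),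
      cartan_homog hL hxA hlam _ y z,
      cartan_smul1 hL hxA lam (fderiv ℝ V x u + (Γ₂ x) u (V x)) y z] at h2
    have hlam' : lam ≠ 0 := ne_of_gt hlam
    have h2' : fderiv ℝ (fun p => gF L p (V p) y z) x u
        = gF L x (V x) ((Γ₂ x) u y) z + gF L x (V x) y ((Γ₂ x) u z)
          + 2 * CartanF L x (V x) (fderiv ℝ V x u + (Γ₂ x) u (V x)) y z := by
      rw [h2]
      field_simp
    -- now subtract
    have hgy : gF L x (V x) (D u y) z
        = gF L x (V x) ((Γ₁ x) u y) z - gF L x (V x) ((Γ₂ x) u y) z := gsub _ _ _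
    have hgz : gF L x (V x) (D u z) y
        = gF L x (V x) ((Γ₁ x) u z) y - gF L x (V x) ((Γ₂ x) u z) y := gsub _ _ _
    have hc : CartanF L x (V x) (D u (V x)) y z
        = CartanF L x (V x) (fderiv ℝ V x u + (Γ₁ x) u (V x)) y z
          - CartanF L x (V x) (fderiv ℝ V x u + (Γ₂ x) u (V x)) y z := by
      have hvec : D u (V x) = (fderiv ℝ V x u + (Γ₁ x) u (V x))
          - (fderiv ℝ V x u + (Γ₂ x) u (V x)) := by
        simp only [hD]; abel
      rw [hvec, cartan_sub1 hL hxA]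
    have hsy1 : gF L x (V x) ((Γ₁ x) u z) y = gF L x (V x) y ((Γ₁ x) u z) := gsymm _ _
    have hsy2 : gF L x (V x) ((Γ₂ x) u z) y = gF L x (V x) y ((Γ₂ x) u z) := gsymm _ _
    rw [hgy, hgz, hc, hsy1, hsy2]
    linarith [h1, h2']
  -- Koszul-type elimination
  have hstar : ∀ u y z : Vec n,
      gF L x (V x) (D u y) z
        = -(CartanF L x (V x) (D u (V x)) y z) - CartanF L x (V x) (D y (V x)) z u
          + CartanF L x (V x) (D z (V x)) u y := by
    intro u y z
    have e1 := key u y z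
    have e2 := key y z u
    have e3 := key z u y
    have s1 : gF L x (V x) (D u z) y = gF L x (V x) (D z u) y := by rw [hDsymm u z]
    have s2 : gF L x (V x) (D y z) u = gF L x (V x) (D z y) u := by rw [hDsymm y z]
    have s3 : gF L x (V x) (D y u) z = gF L x (V x) (D u y) z := by rw [hDsymm y u]
    linarith
  have hDvv : D (V x) (V x) = 0 := by
    apply hnd
    intro w
    have := hstar (V x) (V x) w
    rw [cartan_euler2 hL hxA, cartan_euler3 hL hxA, cartan_euler2 hL hxA] at this
    linarith
  have hDuv : ∀ u : Vec n, D u (V x) = 0 := by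
    intro u
    apply hnd
    intro w
    have := hstar u (V x) w
    rw [cartan_euler2 hL hxA, hDvv, cartan_zero1 hL hxA, cartan_euler3 hL hxA] at this
    linarith
  have hDzero : ∀ u y : Vec n, D u y = 0 := by
    intro u y
    apply hnd
    intro w
    have := hstar u y w
    rw [hDuv u, hDuv y, hDuv w, cartan_zero1 hL hxA, cartan_zero1 hL hxA,
      cartan_zero1 hL hxA] at this
    linarith
  apply ContinuousLinearMap.ext
  intro u
  apply ContinuousLinearMap.ext
  intro y
  have := hDzero u y
  simp only [hD] at this
  exact sub_eq_zero.mp this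
end
end

section
/- Let L be a pseudo-Finsler metric on a conic domain A over Ω ⊆ ℝⁿ. Let V and W be two L-admissible smooth vector fields on Ω, let Γ^V be a torsion-free connection datum almost g-compatible with reference V, and let Γ^W be a torsion-free connection datum almost g-compatible with reference W. If x₀ ∈ Ω satisfies V(x₀) = W(x₀), then Γ^V(x₀) = Γ^W(x₀); that is, the Chern connection coefficients at a point depend only on the value of the reference vector field at that point and not on its extension. -/
noncomputable section

open scoped Topology

section ChernHelpers

variable {E' F' G' : Type*} [NormedAddCommGroup E'] [NormedSpace ℝ E']
  [NormedAddCommGroup F'] [NormedSpace ℝ F'] [NormedAddCommGroup G'] [NormedSpace ℝ G']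

lemma hasDerivAt_along' {f : E' → F'} {p : E'} (hf : DifferentiableAt ℝ f p) (u : E') :
    HasDerivAt (fun s : ℝ => f (p + s • u)) (fderiv ℝ f p u) 0 := by
  have hc : HasDerivAt (fun s : ℝ => p + s • u) u 0 := by
    simpa using ((hasDerivAt_id (0:ℝ)).smul_const u).const_add p
  have h0 : HasFDerivAt f (fderiv ℝ f p) ((fun s : ℝ => p + s • u) 0) := by
    simpa using hf.hasFDerivAt
  exact h0.comp_hasDerivAt 0 hc

lemma deriv_along' {f : E' → F'} {p : E'} (hf : DifferentiableAt ℝ f p) (u : E') :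
    deriv (fun s : ℝ => f (p + s • u)) 0 = fderiv ℝ f p u :=
  (hasDerivAt_along' hf u).deriv

lemma hasFDerivAt_clm_apply_const' {Φ : E' → (G' →L[ℝ] F')} {p : E'}
    (hΦ : DifferentiableAt ℝ Φ p) (v : G') :
    HasFDerivAt (fun q => Φ q v) ((fderiv ℝ Φ p).flip v) p := by
  have := hΦ.hasFDerivAt.clm_apply (hasFDerivAt_const v p)
  simpa using this

lemma fderiv_apply2' {Φ : E' → E' →L[ℝ] E' →L[ℝ] F'} {p : E'}
    (hΦ : DifferentiableAt ℝ Φ p) (w z : E') :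
    HasFDerivAt (fun q => Φ q w z) (((fderiv ℝ Φ p).flip w).flip z) p := by
  have h1 := hasFDerivAt_clm_apply_const' hΦ w
  have h2 := hasFDerivAt_clm_apply_const' h1.differentiableAt z
  rwa [h1.fderiv] at h2

lemma ev_mem_line' {U : Set E'} (hU : IsOpen U) {p : E'} (hp : p ∈ U) (u : E') :
    ∀ᶠ t : ℝ in 𝓝 0, p + t • u ∈ U := by
  have hcont : Continuous fun t : ℝ => p + t • u := by continuity
  have h : Filter.Tendsto (fun t : ℝ => p + t • u) (𝓝 0) (𝓝 p) := by
    simpa using hcont.tendsto 0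
  exact h (hU.mem_nhds hp)

lemma deriv_deriv_eq' {f : E' → F'} {U : Set E'} (hU : IsOpen U) (hf : ContDiffOn ℝ 2 f U)
    {p : E'} (hp : p ∈ U) (u w : E') :
    deriv (fun t : ℝ => deriv (fun s : ℝ => f (p + t • u + s • w)) 0) 0
      = fderiv ℝ (fderiv ℝ f) p u w := by
  have hdiff : ∀ q ∈ U, DifferentiableAt ℝ f q := fun q hq =>
    (hf.contDiffAt (hU.mem_nhds hq)).differentiableAt (by norm_num)
  have hf' : ContDiffOn ℝ 1 (fderiv ℝ f) U := hf.fderiv_of_isOpen hU (by norm_num)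
  have hΦ : DifferentiableAt ℝ (fderiv ℝ f) p :=
    (hf'.contDiffAt (hU.mem_nhds hp)).differentiableAt (by norm_num)
  have hev : (fun t : ℝ => deriv (fun s : ℝ => f (p + t • u + s • w)) 0)
      =ᶠ[𝓝 0] fun t : ℝ => fderiv ℝ f (p + t • u) w := by
    filter_upwards [ev_mem_line' hU hp u] with t ht
    exact deriv_along' (hdiff _ ht) w
  rw [hev.deriv_eq]
  have h2 := hasFDerivAt_clm_apply_const' hΦ w
  rw [deriv_along' h2.differentiableAt u, h2.fderiv]
  simp

lemma deriv3_eq' {f : E' → F'} {U : Set E'} (hU : IsOpen U) (hf : ContDiffOn ℝ 3 f U)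
    {p : E'} (hp : p ∈ U) (u₁ u₂ u₃ : E') :
    deriv (fun s₁ : ℝ => deriv (fun s₂ : ℝ => deriv (fun s₃ : ℝ =>
        f (p + s₁ • u₁ + s₂ • u₂ + s₃ • u₃)) 0) 0) 0
      = fderiv ℝ (fderiv ℝ (fderiv ℝ f)) p u₁ u₂ u₃ := by
  have hD1 : ContDiffOn ℝ 2 (fderiv ℝ f) U := hf.fderiv_of_isOpen hU (by norm_num)
  have hD2 : ContDiffOn ℝ 1 (fderiv ℝ (fderiv ℝ f)) U := hD1.fderiv_of_isOpen hU (by norm_num)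
  have hΦ : DifferentiableAt ℝ (fderiv ℝ (fderiv ℝ f)) p :=
    (hD2.contDiffAt (hU.mem_nhds hp)).differentiableAt (by norm_num)
  have hev : (fun s₁ : ℝ => deriv (fun s₂ : ℝ => deriv (fun s₃ : ℝ =>
        f (p + s₁ • u₁ + s₂ • u₂ + s₃ • u₃)) 0) 0)
      =ᶠ[𝓝 0] fun s₁ : ℝ => fderiv ℝ (fderiv ℝ f) (p + s₁ • u₁) u₂ u₃ := by
    filter_upwards [ev_mem_line' hU hp u₁] with t ht
    exact deriv_deriv_eq' hU (hf.of_le (by norm_num)) ht u₂ u₃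
  rw [hev.deriv_eq]
  have h2 := fderiv_apply2' hΦ u₂ u₃
  rw [deriv_along' h2.differentiableAt u₁, h2.fderiv]
  simp

end ChernHelpers

section ChernVecHelpers
variable {n : ℕ} {A : Set (Vec n × Vec n)} {L : Vec n × Vec n → ℝ}

lemma gF_eq_fderiv2_s6 (hA : IsOpen A) (hf : ContDiffOn ℝ 2 L A) {x v : Vec n}
    (h : (x, v) ∈ A) (u w : Vec n) :
    gF L x v u w
      = (1 / 2) * fderiv ℝ (fderiv ℝ L) (x, v) ((0 : Vec n), u) ((0 : Vec n), w) := by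
  unfold gF
  congr 1
  have hrw : (fun t : ℝ => deriv (fun s : ℝ => L (x, v + t • u + s • w)) 0)
      = fun t : ℝ => deriv (fun s : ℝ =>
          L ((x, v) + t • ((0 : Vec n), u) + s • ((0 : Vec n), w))) 0 := by
    funext t; congr 1; funext s; congr 1
    simp [Prod.ext_iff]
  rw [hrw, deriv_deriv_eq' hA hf h]

lemma CartanF_eq_fderiv3 (hA : IsOpen A) (hf : ContDiffOn ℝ 3 L A) {x v : Vec n}
    (h : (x, v) ∈ A) (w₁ w₂ w₃ : Vec n) :
    CartanF L x v w₁ w₂ w₃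
      = (1 / 4) * fderiv ℝ (fderiv ℝ (fderiv ℝ L)) (x, v)
          ((0 : Vec n), w₁) ((0 : Vec n), w₂) ((0 : Vec n), w₃) := by
  unfold CartanF
  congr 1
  have hrw : (fun s₁ : ℝ => deriv (fun s₂ : ℝ => deriv (fun s₃ : ℝ =>
        L (x, v + s₁ • w₁ + s₂ • w₂ + s₃ • w₃)) 0) 0)
      = fun s₁ : ℝ => deriv (fun s₂ : ℝ => deriv (fun s₃ : ℝ =>
          L ((x, v) + s₁ • ((0 : Vec n), w₁) + s₂ • ((0 : Vec n), w₂)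
            + s₃ • ((0 : Vec n), w₃))) 0) 0 := by
    funext s₁; congr 1; funext s₂; congr 1; funext s₃
    congr 1
    simp [Prod.ext_iff]
  rw [hrw, deriv3_eq' hA hf h]

lemma euler3' (hA : IsOpen A)
    (hconic : ∀ p ∈ A, ∀ lam : ℝ, 0 < lam → (p.1, lam • p.2) ∈ A)
    (hhom : ∀ p ∈ A, ∀ lam : ℝ, 0 < lam → L (p.1, lam • p.2) = lam ^ 2 * L p)
    (hf : ContDiffOn ℝ 3 L A) {x₀ v₀ : Vec n} (hp : (x₀, v₀) ∈ A) (b c : Vec n) :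
    fderiv ℝ (fderiv ℝ (fderiv ℝ L)) (x₀, v₀)
      ((0 : Vec n), v₀) ((0 : Vec n), c) ((0 : Vec n), b) = 0 := by
  set M : ℝ → (Vec n × Vec n) →L[ℝ] (Vec n × Vec n) := fun lam =>
    (ContinuousLinearMap.id ℝ (Vec n)).prodMap (lam • ContinuousLinearMap.id ℝ (Vec n))
    with hMdef
  have hM : ∀ (lam : ℝ) (q : Vec n × Vec n), M lam q = (q.1, lam • q.2) := by
    intro lam q; rfl
  have hdiffL : ∀ q ∈ A, DifferentiableAt ℝ L q := fun q hq =>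
    (hf.contDiffAt (hA.mem_nhds hq)).differentiableAt (by norm_num)
  have hD1cd : ContDiffOn ℝ 2 (fderiv ℝ L) A := hf.fderiv_of_isOpen hA (by norm_num)
  have hdiffD1 : ∀ q ∈ A, DifferentiableAt ℝ (fderiv ℝ L) q := fun q hq =>
    (hD1cd.contDiffAt (hA.mem_nhds hq)).differentiableAt (by norm_num)
  have hD2cd : ContDiffOn ℝ 1 (fderiv ℝ (fderiv ℝ L)) A := hD1cd.fderiv_of_isOpen hA (by norm_num)
  have hdiffD2 : ∀ q ∈ A, DifferentiableAt ℝ (fderiv ℝ (fderiv ℝ L)) q := fun q hq =>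
    (hD2cd.contDiffAt (hA.mem_nhds hq)).differentiableAt (by norm_num)
  have step1 : ∀ lam : ℝ, 0 < lam → ∀ q ∈ A,
      fderiv ℝ L (M lam q) ((0 : Vec n), b) = lam * fderiv ℝ L q ((0 : Vec n), b) := by
    intro lam hlam q hq
    have hMq : M lam q ∈ A := by rw [hM]; exact hconic q hq lam hlam
    have hcomp : HasFDerivAt (L ∘ (M lam)) ((fderiv ℝ L (M lam q)).comp (M lam)) q :=
      (hdiffL _ hMq).hasFDerivAt.comp q (M lam).hasFDerivAt
    have hev : (L ∘ M lam) =ᶠ[𝓝 q] fun q' => lam ^ 2 * L q' := by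
      filter_upwards [hA.mem_nhds hq] with q' hq'
      show L (M lam q') = _
      rw [hM]; exact hhom q' hq' lam hlam
    have h2 : HasFDerivAt (fun q' => lam ^ 2 * L q') ((fderiv ℝ L (M lam q)).comp (M lam)) q :=
      hcomp.congr_of_eventuallyEq hev.symm
    have h3 : HasFDerivAt (fun q' => lam ^ 2 * L q') (lam ^ 2 • fderiv ℝ L q) q :=
      ((hdiffL q hq).hasFDerivAt).const_mul (lam ^ 2)
    have h4 := h2.unique h3
    have h5 := congrArg (fun T : (Vec n × Vec n) →L[ℝ] ℝ => T ((0 : Vec n), b)) h4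
    simp only [ContinuousLinearMap.coe_comp', Function.comp_apply,
      ContinuousLinearMap.smul_apply, smul_eq_mul] at h5
    have h6 : M lam ((0 : Vec n), b) = lam • ((0 : Vec n), b) := by
      rw [hM]; simp [Prod.ext_iff]
    rw [h6, (fderiv ℝ L (M lam q)).map_smul] at h5
    simp only [smul_eq_mul] at h5
    rw [sq, mul_assoc] at h5
    exact mul_left_cancel₀ hlam.ne' h5
  have step2 : ∀ lam : ℝ, 0 < lam → ∀ q ∈ A,
      fderiv ℝ (fderiv ℝ L) (M lam q) ((0 : Vec n), c) ((0 : Vec n), b)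
        = fderiv ℝ (fderiv ℝ L) q ((0 : Vec n), c) ((0 : Vec n), b) := by
    intro lam hlam q hq
    have hΦderiv : ∀ q' ∈ A, HasFDerivAt (fun r => fderiv ℝ L r ((0 : Vec n), b))
        ((fderiv ℝ (fderiv ℝ L) q').flip ((0 : Vec n), b)) q' := fun q' hq' =>
      hasFDerivAt_clm_apply_const' (hdiffD1 q' hq') ((0 : Vec n), b)
    have hMq : M lam q ∈ A := by rw [hM]; exact hconic q hq lam hlam
    have hcomp : HasFDerivAt ((fun r => fderiv ℝ L r ((0 : Vec n), b)) ∘ M lam)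
        (((fderiv ℝ (fderiv ℝ L) (M lam q)).flip ((0 : Vec n), b)).comp (M lam)) q :=
      (hΦderiv _ hMq).comp q (M lam).hasFDerivAt
    have hev : ((fun r => fderiv ℝ L r ((0 : Vec n), b)) ∘ M lam)
        =ᶠ[𝓝 q] fun q' => lam * fderiv ℝ L q' ((0 : Vec n), b) := by
      filter_upwards [hA.mem_nhds hq] with q' hq'
      exact step1 lam hlam q' hq'
    have h2 := hcomp.congr_of_eventuallyEq hev.symm
    have h3 : HasFDerivAt (fun q' => lam * fderiv ℝ L q' ((0 : Vec n), b))
        (lam • ((fderiv ℝ (fderiv ℝ L) q).flip ((0 : Vec n), b))) q :=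
      (hΦderiv q hq).const_mul lam
    have h4 := h2.unique h3
    have h5 := congrArg (fun T : (Vec n × Vec n) →L[ℝ] ℝ => T ((0 : Vec n), c)) h4
    simp only [ContinuousLinearMap.coe_comp', Function.comp_apply,
      ContinuousLinearMap.smul_apply, ContinuousLinearMap.flip_apply, smul_eq_mul] at h5
    have h6 : M lam ((0 : Vec n), c) = lam • ((0 : Vec n), c) := by
      rw [hM]; simp [Prod.ext_iff]
    rw [h6] at h5
    simp only [map_smul, ContinuousLinearMap.smul_apply, smul_eq_mul] at h5
    exact mul_left_cancel₀ hlam.ne' h5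
  have hcurve : ∀ lam : ℝ, ((x₀, lam • v₀) : Vec n × Vec n)
      = (x₀, v₀) + (lam - 1) • ((0 : Vec n), v₀) := by
    intro lam
    refine Prod.ext (by simp) ?_
    show lam • v₀ = v₀ + (lam - 1) • v₀
    module
  have hΘ := fderiv_apply2' (hdiffD2 _ hp) ((0 : Vec n), c) ((0 : Vec n), b)
  have hc : HasDerivAt (fun lam : ℝ =>
      ((x₀, v₀) : Vec n × Vec n) + (lam - 1) • ((0 : Vec n), v₀)) ((0 : Vec n), v₀) 1 := by
    simpa using (((hasDerivAt_id (1 : ℝ)).sub_const 1).smul_const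
      (((0 : Vec n), v₀) : Vec n × Vec n)).const_add ((x₀, v₀) : Vec n × Vec n)
  have hΘ' : HasFDerivAt (fun q => fderiv ℝ (fderiv ℝ L) q ((0 : Vec n), c) ((0 : Vec n), b))
      (((fderiv ℝ (fderiv ℝ (fderiv ℝ L)) (x₀, v₀)).flip ((0 : Vec n), c)).flip ((0 : Vec n), b))
      ((fun lam : ℝ => ((x₀, v₀) : Vec n × Vec n) + (lam - 1) • ((0 : Vec n), v₀)) 1) := by
    simpa using hΘ
  have hθ := hΘ'.comp_hasDerivAt 1 hc
  have hconst : (fun lam : ℝ => fderiv ℝ (fderiv ℝ L)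
        (((x₀, v₀) : Vec n × Vec n) + (lam - 1) • ((0 : Vec n), v₀))
        ((0 : Vec n), c) ((0 : Vec n), b))
      =ᶠ[𝓝 1] fun _ => fderiv ℝ (fderiv ℝ L) (x₀, v₀) ((0 : Vec n), c) ((0 : Vec n), b) := by
    filter_upwards [eventually_gt_nhds zero_lt_one] with lam hlam
    rw [← hcurve lam]
    have h := step2 lam hlam (x₀, v₀) hp
    rw [hM] at h
    exact h
  have hzero : deriv (fun lam : ℝ => fderiv ℝ (fderiv ℝ L)
        (((x₀, v₀) : Vec n × Vec n) + (lam - 1) • ((0 : Vec n), v₀))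
        ((0 : Vec n), c) ((0 : Vec n), b)) 1 = 0 := by
    rw [hconst.deriv_eq]; simp
  have := hθ.deriv
  simp only [Function.comp_def] at this
  rw [hzero] at this
  simpa [ContinuousLinearMap.flip_apply] using this.symm

end ChernVecHelpers

set_option maxHeartbeats 2000000 in
/-- The Chern connection coefficients at a point depend only on the value of the
reference vector field at that point: if `V(x₀) = W(x₀)` then `Γ^V(x₀) = Γ^W(x₀)`. -/
theorem chern_connection_pointwise {n : ℕ} (hn : 1 ≤ n)
    (Ω : Set (Vec n)) (A : Set (Vec n × Vec n)) (L : Vec n × Vec n → ℝ)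
    (hL : IsPseudoFinsler Ω A L)
    (V W : Vec n → Vec n) (hV : LAdmissible A Ω V) (hW : LAdmissible A Ω W)
    (ΓV : Vec n → Bil n) (hTFV : TorsionFree Ω ΓV) (hACV : AlmostGCompatible L Ω ΓV V)
    (ΓW : Vec n → Bil n) (hTFW : TorsionFree Ω ΓW) (hACW : AlmostGCompatible L Ω ΓW W)
    (x₀ : Vec n) (hx₀ : x₀ ∈ Ω) (hVW : V x₀ = W x₀) :
    ΓV x₀ = ΓW x₀ := by
  have hA : IsOpen A := hL.isOpen_dom
  have hΩ : IsOpen Ω := hL.isOpen_base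
  have hL2 : ContDiffOn ℝ 2 L A := hL.smooth.of_le (by exact WithTop.coe_le_coe.mpr le_top)
  have hL3 : ContDiffOn ℝ 3 L A := hL.smooth.of_le (by exact WithTop.coe_le_coe.mpr le_top)
  have hD1cd : ContDiffOn ℝ 2 (fderiv ℝ L) A := hL3.fderiv_of_isOpen hA (by norm_num)
  have hD2cd : ContDiffOn ℝ 1 (fderiv ℝ (fderiv ℝ L)) A := hD1cd.fderiv_of_isOpen hA (by norm_num)
  have hdiffD2 : ∀ q ∈ A, DifferentiableAt ℝ (fderiv ℝ (fderiv ℝ L)) q := fun q hq =>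
    (hD2cd.contDiffAt (hA.mem_nhds hq)).differentiableAt (by norm_num)
  set v₀ := V x₀ with hv₀
  have hpA : ((x₀, v₀) : Vec n × Vec n) ∈ A := hV.2 x₀ hx₀
  -- the chain rule along an admissible field
  have hchain : ∀ V' : Vec n → Vec n, ContDiffOn ℝ (⊤ : ℕ∞) V' Ω → (∀ x ∈ Ω, (x, V' x) ∈ A) →
      ∀ b c a : Vec n,
      fderiv ℝ (fun y => gF L y (V' y) b c) x₀ a
        = (1 / 2) * fderiv ℝ (fderiv ℝ (fderiv ℝ L)) (x₀, V' x₀)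
            (a, fderiv ℝ V' x₀ a) ((0 : Vec n), b) ((0 : Vec n), c) := by
    intro V' hsm hin b c a
    have hV'diff : DifferentiableAt ℝ V' x₀ :=
      (hsm.contDiffAt (hΩ.mem_nhds hx₀)).differentiableAt (by simp)
    have hpA' : ((x₀, V' x₀) : Vec n × Vec n) ∈ A := hin x₀ hx₀
    have hev : (fun y => gF L y (V' y) b c) =ᶠ[𝓝 x₀]
        fun y => (1 / 2) * fderiv ℝ (fderiv ℝ L) (y, V' y) ((0 : Vec n), b) ((0 : Vec n), c) := by
      filter_upwards [hΩ.mem_nhds hx₀] with y hy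
      exact gF_eq_fderiv2_s6 hA hL2 (hin y hy) b c
    rw [hev.fderiv_eq]
    have hJ : HasFDerivAt (fun y => ((y, V' y) : Vec n × Vec n))
        ((ContinuousLinearMap.id ℝ (Vec n)).prod (fderiv ℝ V' x₀)) x₀ :=
      HasFDerivAt.prodMk (hasFDerivAt_id x₀) hV'diff.hasFDerivAt
    have hG := fderiv_apply2' (hdiffD2 _ hpA') ((0 : Vec n), b) ((0 : Vec n), c)
    have hcomp := hG.comp x₀ hJ
    have hmul := hcomp.const_mul (1 / 2 : ℝ)
    simp only [Function.comp_def] at hmul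
    rw [hmul.fderiv]
    simp [ContinuousLinearMap.flip_apply]
  -- almost compatibility with constant fields
  have hinst : ∀ (V' : Vec n → Vec n) (Γ' : Vec n → Bil n),
      AlmostGCompatible L Ω Γ' V' → ∀ a b c : Vec n,
      fderiv ℝ (fun y => gF L y (V' y) b c) x₀ a
        = gF L x₀ (V' x₀) (Γ' x₀ a b) c + gF L x₀ (V' x₀) b (Γ' x₀ a c)
          + 2 * CartanF L x₀ (V' x₀) (fderiv ℝ V' x₀ a + Γ' x₀ a (V' x₀)) b c := by
    intro V' Γ' hAC a b c
    have H := hAC (fun _ => a) (fun _ => b) (fun _ => c)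
      contDiffOn_const contDiffOn_const contDiffOn_const x₀ hx₀
    simpa [nablaVF] using H
  -- symmetry of the third derivative
  have hsym12 : ∀ u w : Vec n × Vec n,
      fderiv ℝ (fderiv ℝ (fderiv ℝ L)) (x₀, v₀) u w
        = fderiv ℝ (fderiv ℝ (fderiv ℝ L)) (x₀, v₀) w u :=
    (hD1cd.contDiffAt (hA.mem_nhds hpA)).isSymmSndFDerivAt (by simp)
  have hsym23 : ∀ u w z : Vec n × Vec n,
      fderiv ℝ (fderiv ℝ (fderiv ℝ L)) (x₀, v₀) u w z
        = fderiv ℝ (fderiv ℝ (fderiv ℝ L)) (x₀, v₀) u z w := by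
    intro u w z
    have hev : (fun q => fderiv ℝ (fderiv ℝ L) q w z)
        =ᶠ[𝓝 ((x₀, v₀) : Vec n × Vec n)] (fun q => fderiv ℝ (fderiv ℝ L) q z w) := by
      filter_upwards [hA.mem_nhds hpA] with q hq
      exact (hL2.contDiffAt (hA.mem_nhds hq)).isSymmSndFDerivAt (by simp) w z
    have h1 := fderiv_apply2' (hdiffD2 _ hpA) w z
    have h2 := fderiv_apply2' (hdiffD2 _ hpA) z w
    have h3 := (h1.congr_of_eventuallyEq hev.symm).unique h2
    have h4 := congrArg (fun T : (Vec n × Vec n) →L[ℝ] ℝ => T u) h3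
    simpa [ContinuousLinearMap.flip_apply] using h4
  -- Euler identities
  have hE1 : ∀ y z : Vec n, fderiv ℝ (fderiv ℝ (fderiv ℝ L)) (x₀, v₀)
      ((0 : Vec n), v₀) ((0 : Vec n), y) ((0 : Vec n), z) = 0 := fun y z =>
    euler3' hA hL.conic hL.homogeneous hL3 hpA z y
  have hE2 : ∀ X y : Vec n, fderiv ℝ (fderiv ℝ (fderiv ℝ L)) (x₀, v₀)
      ((0 : Vec n), X) ((0 : Vec n), v₀) ((0 : Vec n), y) = 0 := by
    intro X y
    have h := congrArg (fun T : (Vec n × Vec n) →L[ℝ] ℝ => T ((0 : Vec n), y))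
      (hsym12 ((0 : Vec n), X) ((0 : Vec n), v₀))
    rw [h]
    exact hE1 X y
  have hE3 : ∀ X y : Vec n, fderiv ℝ (fderiv ℝ (fderiv ℝ L)) (x₀, v₀)
      ((0 : Vec n), X) ((0 : Vec n), y) ((0 : Vec n), v₀) = 0 := by
    intro X y
    rw [hsym23]
    exact hE2 X y
  have hE0 : ∀ y z : Vec n, fderiv ℝ (fderiv ℝ (fderiv ℝ L)) (x₀, v₀)
      ((0 : Vec n), (0 : Vec n)) ((0 : Vec n), y) ((0 : Vec n), z) = 0 := by
    intro y z
    have h : (((0 : Vec n), (0 : Vec n)) : Vec n × Vec n) = 0 := rfl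
    rw [h, map_zero]
    simp
  -- subtraction lemma for g
  have hgsub : ∀ u₁ u₂ w : Vec n, gF L x₀ v₀ (u₁ - u₂) w
      = gF L x₀ v₀ u₁ w - gF L x₀ v₀ u₂ w := by
    intro u₁ u₂ w
    have hadd := hL.g_add_left (x₀, v₀) hpA u₁ (-u₂) w
    have hneg := hL.g_smul_left (x₀, v₀) hpA (-1) u₂ w
    rw [neg_one_smul] at hneg
    rw [sub_eq_add_neg, hadd, hneg]
    ring
  have hgsymm : ∀ u w : Vec n, gF L x₀ v₀ u w = gF L x₀ v₀ w u :=
    hL.g_symm (x₀, v₀) hpA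
  -- additivity of the third derivative in the fiber slot
  have hT3split : ∀ k k' y z : Vec n,
      fderiv ℝ (fderiv ℝ (fderiv ℝ L)) (x₀, v₀) ((0 : Vec n), k + k')
          ((0 : Vec n), y) ((0 : Vec n), z)
        = fderiv ℝ (fderiv ℝ (fderiv ℝ L)) (x₀, v₀) ((0 : Vec n), k)
            ((0 : Vec n), y) ((0 : Vec n), z)
          + fderiv ℝ (fderiv ℝ (fderiv ℝ L)) (x₀, v₀) ((0 : Vec n), k')
              ((0 : Vec n), y) ((0 : Vec n), z) := by
    intro k k' y z
    have h : (((0 : Vec n), k + k') : Vec n × Vec n) = ((0 : Vec n), k) + ((0 : Vec n), k') := by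
      simp
    rw [h, map_add, ContinuousLinearMap.add_apply, ContinuousLinearMap.add_apply]
  -- the key identity
  have key : ∀ a b c : Vec n,
      gF L x₀ v₀ (ΓV x₀ a b - ΓW x₀ a b) c + gF L x₀ v₀ (ΓV x₀ a c - ΓW x₀ a c) b
        + (1 / 2) * fderiv ℝ (fderiv ℝ (fderiv ℝ L)) (x₀, v₀)
            ((0 : Vec n), ΓV x₀ a v₀ - ΓW x₀ a v₀) ((0 : Vec n), b) ((0 : Vec n), c) = 0 := by
    intro a b c
    have E1 := (hchain V hV.1 hV.2 b c a).symm.trans (hinst V ΓV hACV a b c)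
    have E2 := (hchain W hW.1 hW.2 b c a).symm.trans (hinst W ΓW hACW a b c)
    rw [← hv₀] at E1
    rw [← hVW] at E2
    rw [CartanF_eq_fderiv3 hA hL3 hpA] at E1 E2
    -- split the base direction
    have hsp : ∀ u : Vec n,
        ((a, u) : Vec n × Vec n) = (a, fderiv ℝ W x₀ a) + ((0 : Vec n), u - fderiv ℝ W x₀ a) := by
      intro u; simp
    rw [hsp (fderiv ℝ V x₀ a), map_add, ContinuousLinearMap.add_apply,
      ContinuousLinearMap.add_apply] at E1
    rw [hsp (fderiv ℝ W x₀ a), map_add, ContinuousLinearMap.add_apply,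
      ContinuousLinearMap.add_apply] at E2
    -- split the Cartan arguments
    have hc1 : fderiv ℝ V x₀ a + ΓV x₀ a v₀
        = (fderiv ℝ W x₀ a + ΓW x₀ a v₀) + ((fderiv ℝ V x₀ a - fderiv ℝ W x₀ a)
            + (ΓV x₀ a v₀ - ΓW x₀ a v₀)) := by abel
    have hc1' : fderiv ℝ (fderiv ℝ (fderiv ℝ L)) (x₀, v₀)
        ((0 : Vec n), fderiv ℝ V x₀ a + ΓV x₀ a v₀) ((0 : Vec n), b) ((0 : Vec n), c)
        = fderiv ℝ (fderiv ℝ (fderiv ℝ L)) (x₀, v₀)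
            ((0 : Vec n), (fderiv ℝ W x₀ a + ΓW x₀ a v₀) + ((fderiv ℝ V x₀ a - fderiv ℝ W x₀ a)
              + (ΓV x₀ a v₀ - ΓW x₀ a v₀))) ((0 : Vec n), b) ((0 : Vec n), c) := by
      rw [hc1]
    have t1 := hT3split (fderiv ℝ W x₀ a + ΓW x₀ a v₀)
      ((fderiv ℝ V x₀ a - fderiv ℝ W x₀ a) + (ΓV x₀ a v₀ - ΓW x₀ a v₀)) b c
    have t3 := hT3split (fderiv ℝ V x₀ a - fderiv ℝ W x₀ a) (ΓV x₀ a v₀ - ΓW x₀ a v₀) b c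
    have hz0 : fderiv ℝ (fderiv ℝ (fderiv ℝ L)) (x₀, v₀)
        ((0 : Vec n), fderiv ℝ W x₀ a - fderiv ℝ W x₀ a) ((0 : Vec n), b) ((0 : Vec n), c)
          = 0 := by
      rw [sub_self]
      have h : (((0 : Vec n), (0 : Vec n)) : Vec n × Vec n) = 0 := rfl
      rw [h, map_zero]
      simp
    have hg1 := hgsub (ΓV x₀ a b) (ΓW x₀ a b) c
    have hg2 := hgsub (ΓV x₀ a c) (ΓW x₀ a c) b
    have hs1 := hgsymm b (ΓV x₀ a c)
    have hs2 := hgsymm b (ΓW x₀ a c)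
    have hs3 := hgsymm b (ΓV x₀ a c - ΓW x₀ a c)
    linarith [E1, E2, hc1', t1, t3, hz0, hg1, hg2, hs1, hs2, hs3]
  -- torsion-freeness gives symmetry of the difference
  have hsymD : ∀ a b c : Vec n,
      gF L x₀ v₀ (ΓV x₀ a b - ΓW x₀ a b) c = gF L x₀ v₀ (ΓV x₀ b a - ΓW x₀ b a) c := by
    intro a b c
    rw [hTFV x₀ hx₀ a b, hTFW x₀ hx₀ a b]
  -- Koszul-type combination
  have combo : ∀ a b c : Vec n,
      2 * gF L x₀ v₀ (ΓV x₀ a b - ΓW x₀ a b) c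
        = - (1 / 2) * fderiv ℝ (fderiv ℝ (fderiv ℝ L)) (x₀, v₀)
              ((0 : Vec n), ΓV x₀ a v₀ - ΓW x₀ a v₀) ((0 : Vec n), b) ((0 : Vec n), c)
          - (1 / 2) * fderiv ℝ (fderiv ℝ (fderiv ℝ L)) (x₀, v₀)
              ((0 : Vec n), ΓV x₀ b v₀ - ΓW x₀ b v₀) ((0 : Vec n), c) ((0 : Vec n), a)
          + (1 / 2) * fderiv ℝ (fderiv ℝ (fderiv ℝ L)) (x₀, v₀)
              ((0 : Vec n), ΓV x₀ c v₀ - ΓW x₀ c v₀) ((0 : Vec n), a) ((0 : Vec n), b) := by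
    intro a b c
    have k1 := key a b c
    have k2 := key b c a
    have k3 := key c a b
    have s1 := hsymD b a c
    have s2 := hsymD c a b
    have s3 := hsymD c b a
    linarith [k1, k2, k3, s1, s2, s3]
  -- step A : the difference vanishes on (v₀, v₀)
  have hDvv : ΓV x₀ v₀ v₀ - ΓW x₀ v₀ v₀ = 0 := by
    refine hL.g_nondeg (x₀, v₀) hpA _ fun w => ?_
    have hc := combo v₀ v₀ w
    rw [hE2, hE3, hE2] at hc
    linarith
  -- step B : the difference vanishes on (a, v₀)
  have hDav : ∀ a : Vec n, ΓV x₀ a v₀ - ΓW x₀ a v₀ = 0 := by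
    intro a
    refine hL.g_nondeg (x₀, v₀) hpA _ fun w => ?_
    have hc := combo a v₀ w
    rw [hE2, hDvv, hE0, hE3] at hc
    linarith
  -- step C : the difference vanishes everywhere
  have hDab : ∀ a b : Vec n, ΓV x₀ a b = ΓW x₀ a b := by
    intro a b
    rw [← sub_eq_zero]
    refine hL.g_nondeg (x₀, v₀) hpA _ fun w => ?_
    have hc := combo a b w
    rw [hDav a, hDav b, hDav w, hE0, hE0, hE0] at hc
    linarith
  exact ContinuousLinearMap.ext fun a => ContinuousLinearMap.ext fun b => hDab a b
end
end

section
/- Let L be a pseudo-Finsler metric on a conic domain A over Ω ⊆ ℝⁿ, let V be an L-admissible smooth vector field on Ω, and let Γ be a torsion-free connection datum almost g-compatible with reference V. Then for every x₀ ∈ Ω, writing v := V(x₀), the quadratic part of Γ satisfies the formal Levi-Civita identity: for all z ∈ ℝⁿ, g_{(x₀,v)}(Γ(x₀)(v,v), z) = ∂ˣ_v g(v,z) − ½ ∂ˣ_z g(v,v), where for u, a, b ∈ ℝⁿ, ∂ˣ_u g(a,b) denotes the directional derivative at x₀ in direction u of the function x ↦ g_{(x,v)}(a,b) (the fiber variable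 v being held fixed). -/
noncomputable section

open scoped Topology

namespace FLCHelp

variable {n : ℕ}

/-- Fiber derivative of `L` in direction `b`. -/
def ellF (L : Vec n × Vec n → ℝ) (b : Vec n) : Vec n × Vec n → ℝ :=
  fun q => fderiv ℝ L q ((0 : Vec n), b)

/-- Second fiber derivative of `L`. -/
def mF (L : Vec n × Vec n → ℝ) (a b : Vec n) : Vec n × Vec n → ℝ :=
  fun q => fderiv ℝ (ellF L b) q ((0 : Vec n), a)

variable {A : Set (Vec n × Vec n)} {L : Vec n × Vec n → ℝ}

lemma contDiffOn_ellF (hA : IsOpen A) (hL : ContDiffOn ℝ (⊤ : ℕ∞) L A) (b : Vec n) :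
    ContDiffOn ℝ (⊤ : ℕ∞) (ellF L b) A :=
  (hL.fderiv_of_isOpen hA (by simp)).clm_apply contDiffOn_const

lemma contDiffOn_mF (hA : IsOpen A) (hL : ContDiffOn ℝ (⊤ : ℕ∞) L A) (a b : Vec n) :
    ContDiffOn ℝ (⊤ : ℕ∞) (mF L a b) A :=
  (((contDiffOn_ellF hA hL b).fderiv_of_isOpen hA (by simp)).clm_apply contDiffOn_const)

lemma diffAt_of_cdOn {f : Vec n × Vec n → ℝ} (hA : IsOpen A)
    (hf : ContDiffOn ℝ (⊤ : ℕ∞) f A) {q : Vec n × Vec n} (hq : q ∈ A) :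
    DifferentiableAt ℝ f q :=
  (hf.contDiffAt (hA.mem_nhds hq)).differentiableAt (by simp)

lemma deriv_smul_line {E : Type*} [NormedAddCommGroup E] [NormedSpace ℝ E]
    (f : E → ℝ) (c u : E) (hf : DifferentiableAt ℝ f c) :
    deriv (fun s : ℝ => f (c + s • u)) 0 = fderiv ℝ f c u := by
  have h : HasDerivAt (fun s : ℝ => c + s • u) u 0 := by
    simpa using ((hasDerivAt_id (0 : ℝ)).smul_const u).const_add c
  have h2 : HasFDerivAt f (fderiv ℝ f c) ((fun s : ℝ => c + s • u) 0) := by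
    simpa using hf.hasFDerivAt
  simpa [Function.comp_def] using (h2.comp_hasDerivAt 0 h).deriv

lemma deriv2_eq_mF (hA : IsOpen A) (hL : ContDiffOn ℝ (⊤ : ℕ∞) L A) {q : Vec n × Vec n}
    (hq : q ∈ A) (b c : Vec n) :
    deriv (fun s : ℝ => deriv (fun r : ℝ =>
        L (q + s • ((0 : Vec n), b) + r • ((0 : Vec n), c))) 0) 0 = mF L b c q := by
  have hcont : ContinuousAt (fun s : ℝ => q + s • ((0 : Vec n), b)) 0 := by fun_prop
  have h0 : (fun s : ℝ => q + s • ((0 : Vec n), b)) 0 = q := by simp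
  have hmem : ∀ᶠ s : ℝ in 𝓝 0, q + s • ((0 : Vec n), b) ∈ A := by
    have := hcont.preimage_mem_nhds (h0 ▸ hA.mem_nhds hq)
    exact this
  have key : (fun s : ℝ => deriv (fun r : ℝ =>
        L (q + s • ((0 : Vec n), b) + r • ((0 : Vec n), c))) 0)
      =ᶠ[𝓝 0] fun s : ℝ => ellF L c (q + s • ((0 : Vec n), b)) := by
    filter_upwards [hmem] with s hs
    exact deriv_smul_line L _ _ (diffAt_of_cdOn hA hL hs)
  rw [key.deriv_eq]
  exact deriv_smul_line (ellF L c) q _ (diffAt_of_cdOn hA (contDiffOn_ellF hA hL c) hq)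

lemma gF_eq_mF (hA : IsOpen A) (hL : ContDiffOn ℝ (⊤ : ℕ∞) L A) {x w : Vec n}
    (hp : (x, w) ∈ A) (a b : Vec n) :
    gF L x w a b = (1 / 2) * mF L a b (x, w) := by
  have hrw : (fun t : ℝ => deriv (fun s : ℝ => L (x, w + t • a + s • b)) 0)
      = fun t : ℝ => deriv (fun s : ℝ =>
          L ((x, w) + t • ((0 : Vec n), a) + s • ((0 : Vec n), b))) 0 := by
    funext t
    congr 1
    funext s
    congr 1
    simp [Prod.ext_iff]
  unfold gF
  rw [hrw, deriv2_eq_mF hA hL hp a b]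

lemma CartanF_eq_D3 (hA : IsOpen A) (hL : ContDiffOn ℝ (⊤ : ℕ∞) L A) {x v : Vec n}
    (hp : (x, v) ∈ A) (w₁ w₂ w₃ : Vec n) :
    CartanF L x v w₁ w₂ w₃
      = (1 / 4) * fderiv ℝ (mF L w₂ w₃) (x, v) ((0 : Vec n), w₁) := by
  have hrw : (fun s₁ : ℝ => deriv (fun s₂ : ℝ => deriv (fun s₃ : ℝ =>
        L (x, v + s₁ • w₁ + s₂ • w₂ + s₃ • w₃)) 0) 0)
      = fun s₁ : ℝ => deriv (fun s₂ : ℝ => deriv (fun s₃ : ℝ =>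
          L (((x, v) + s₁ • ((0 : Vec n), w₁)) + s₂ • ((0 : Vec n), w₂)
            + s₃ • ((0 : Vec n), w₃))) 0) 0 := by
    funext s₁
    congr 1
    funext s₂
    congr 1
    funext s₃
    congr 1
    simp [Prod.ext_iff]
  unfold CartanF
  rw [hrw]
  have hcont : ContinuousAt (fun s₁ : ℝ => (x, v) + s₁ • ((0 : Vec n), w₁)) 0 := by fun_prop
  have h0 : (fun s₁ : ℝ => (x, v) + s₁ • ((0 : Vec n), w₁)) 0 = (x, v) := by simp
  have hmem : ∀ᶠ s₁ : ℝ in 𝓝 0, (x, v) + s₁ • ((0 : Vec n), w₁) ∈ A := by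
    have := hcont.preimage_mem_nhds (h0 ▸ hA.mem_nhds hp)
    exact this
  have key : (fun s₁ : ℝ => deriv (fun s₂ : ℝ => deriv (fun s₃ : ℝ =>
        L (((x, v) + s₁ • ((0 : Vec n), w₁)) + s₂ • ((0 : Vec n), w₂)
          + s₃ • ((0 : Vec n), w₃))) 0) 0)
      =ᶠ[𝓝 0] fun s₁ : ℝ => mF L w₂ w₃ ((x, v) + s₁ • ((0 : Vec n), w₁)) := by
    filter_upwards [hmem] with s₁ hs
    exact deriv2_eq_mF hA hL hs w₂ w₃
  rw [key.deriv_eq,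
    deriv_smul_line (mF L w₂ w₃) _ _ (diffAt_of_cdOn hA (contDiffOn_mF hA hL w₂ w₃) hp)]

end FLCHelp
namespace FLCHelp

variable {n : ℕ} {A : Set (Vec n × Vec n)} {L : Vec n × Vec n → ℝ}

/-- The fiber-scaling continuous linear map. -/
def Smap (n : ℕ) (lam : ℝ) : Vec n × Vec n →L[ℝ] Vec n × Vec n :=
  (ContinuousLinearMap.id ℝ (Vec n)).prodMap (lam • ContinuousLinearMap.id ℝ (Vec n))

@[simp] lemma Smap_apply (lam : ℝ) (q : Vec n × Vec n) :
    Smap n lam q = (q.1, lam • q.2) := rfl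

lemma ellF_homog (hA : IsOpen A) (hL : ContDiffOn ℝ (⊤ : ℕ∞) L A)
    (hconic : ∀ p ∈ A, ∀ lam : ℝ, 0 < lam → (p.1, lam • p.2) ∈ A)
    (hhom : ∀ p ∈ A, ∀ lam : ℝ, 0 < lam → L (p.1, lam • p.2) = lam ^ 2 * L p)
    (c : Vec n) {lam : ℝ} (hlam : 0 < lam) {q : Vec n × Vec n} (hq : q ∈ A) :
    ellF L c (Smap n lam q) = lam * ellF L c q := by
  have hSq : Smap n lam q ∈ A := by
    simpa using hconic q hq lam hlam
  have heq : (fun r => L (Smap n lam r)) =ᶠ[𝓝 q] fun r => lam ^ 2 * L r := by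
    filter_upwards [hA.mem_nhds hq] with r hr
    simpa using hhom r hr lam hlam
  have hchain : fderiv ℝ (fun r => L (Smap n lam r)) q
      = (fderiv ℝ L (Smap n lam q)).comp (Smap n lam) := by
    rw [show (fun r => L (Smap n lam r)) = L ∘ (Smap n lam) from rfl,
      fderiv_comp q (diffAt_of_cdOn hA hL hSq) (Smap n lam).differentiableAt,
      (Smap n lam).fderiv]
  have hr : fderiv ℝ (fun r => lam ^ 2 * L r) q = lam ^ 2 • fderiv ℝ L q :=
    by exact fderiv_const_mul (diffAt_of_cdOn hA hL hq) (lam ^ 2)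
  have hfd := heq.fderiv_eq (𝕜 := ℝ)
  rw [hchain, hr] at hfd
  have happ := congrArg (fun T : Vec n × Vec n →L[ℝ] ℝ => T ((0 : Vec n), c)) hfd
  simp only [ContinuousLinearMap.comp_apply, ContinuousLinearMap.smul_apply] at happ
  have hSc : Smap n lam ((0 : Vec n), c) = lam • ((0 : Vec n), c) := by
    simp [Prod.ext_iff]
  rw [hSc, (fderiv ℝ L (Smap n lam q)).map_smul] at happ
  have hlam' : lam ≠ 0 := ne_of_gt hlam
  have : lam * ellF L c (Smap n lam q) = lam * (lam * ellF L c q) := by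
    simpa [ellF, smul_eq_mul, pow_two, mul_assoc] using happ
  exact mul_left_cancel₀ hlam' this

lemma mF_homog (hA : IsOpen A) (hL : ContDiffOn ℝ (⊤ : ℕ∞) L A)
    (hconic : ∀ p ∈ A, ∀ lam : ℝ, 0 < lam → (p.1, lam • p.2) ∈ A)
    (hhom : ∀ p ∈ A, ∀ lam : ℝ, 0 < lam → L (p.1, lam • p.2) = lam ^ 2 * L p)
    (b c : Vec n) {lam : ℝ} (hlam : 0 < lam) {q : Vec n × Vec n} (hq : q ∈ A) :
    mF L b c (Smap n lam q) = mF L b c q := by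
  have hSq : Smap n lam q ∈ A := by
    simpa using hconic q hq lam hlam
  have hell := contDiffOn_ellF hA hL c
  have heq : (fun r => ellF L c (Smap n lam r)) =ᶠ[𝓝 q] fun r => lam * ellF L c r := by
    filter_upwards [hA.mem_nhds hq] with r hr
    exact ellF_homog hA hL hconic hhom c hlam hr
  have hchain : fderiv ℝ (fun r => ellF L c (Smap n lam r)) q
      = (fderiv ℝ (ellF L c) (Smap n lam q)).comp (Smap n lam) := by
    rw [show (fun r => ellF L c (Smap n lam r)) = (ellF L c) ∘ (Smap n lam) from rfl,
      fderiv_comp q (diffAt_of_cdOn hA hell hSq) (Smap n lam).differentiableAt,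
      (Smap n lam).fderiv]
  have hr : fderiv ℝ (fun r => lam * ellF L c r) q = lam • fderiv ℝ (ellF L c) q :=
    by exact fderiv_const_mul (diffAt_of_cdOn hA hell hq) lam
  have hfd := heq.fderiv_eq (𝕜 := ℝ)
  rw [hchain, hr] at hfd
  have happ := congrArg (fun T : Vec n × Vec n →L[ℝ] ℝ => T ((0 : Vec n), b)) hfd
  simp only [ContinuousLinearMap.comp_apply, ContinuousLinearMap.smul_apply] at happ
  have hSb : Smap n lam ((0 : Vec n), b) = lam • ((0 : Vec n), b) := by
    simp [Prod.ext_iff]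
  rw [hSb, (fderiv ℝ (ellF L c) (Smap n lam q)).map_smul] at happ
  have hlam' : lam ≠ 0 := ne_of_gt hlam
  have : lam * mF L b c (Smap n lam q) = lam * mF L b c q := by
    simpa [mF, smul_eq_mul] using happ
  exact mul_left_cancel₀ hlam' this

lemma euler_mF (hA : IsOpen A) (hL : ContDiffOn ℝ (⊤ : ℕ∞) L A)
    (hconic : ∀ p ∈ A, ∀ lam : ℝ, 0 < lam → (p.1, lam • p.2) ∈ A)
    (hhom : ∀ p ∈ A, ∀ lam : ℝ, 0 < lam → L (p.1, lam • p.2) = lam ^ 2 * L p)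
    {x v : Vec n} (hp : (x, v) ∈ A) (b c : Vec n) :
    fderiv ℝ (mF L b c) (x, v) ((0 : Vec n), v) = 0 := by
  have hc1 : HasDerivAt (fun lam : ℝ => ((x, lam • v) : Vec n × Vec n)) ((0 : Vec n), v) 1 := by
    have h2 : HasDerivAt (fun lam : ℝ => lam • v) v 1 := by
      simpa using (hasDerivAt_id (1 : ℝ)).smul_const v
    exact (hasDerivAt_const (1 : ℝ) x).prodMk h2
  have hdm : DifferentiableAt ℝ (mF L b c) (x, v) :=
    diffAt_of_cdOn hA (contDiffOn_mF hA hL b c) hp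
  have h2 : HasFDerivAt (mF L b c) (fderiv ℝ (mF L b c) (x, v))
      ((fun lam : ℝ => ((x, lam • v) : Vec n × Vec n)) 1) := by
    simpa using hdm.hasFDerivAt
  have hcomp := h2.comp_hasDerivAt 1 hc1
  have heq : (fun lam : ℝ => mF L b c ((x, lam • v) : Vec n × Vec n))
      =ᶠ[𝓝 (1 : ℝ)] fun _ => mF L b c (x, v) := by
    filter_upwards [eventually_gt_nhds zero_lt_one] with lam hlam
    have := mF_homog hA hL hconic hhom b c hlam hp
    simpa using this
  have hder : deriv (fun lam : ℝ => mF L b c ((x, lam • v) : Vec n × Vec n)) 1 = 0 := by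
    rw [heq.deriv_eq]
    simp
  have := hcomp.deriv
  rw [show (mF L b c ∘ fun lam : ℝ => ((x, lam • v) : Vec n × Vec n))
      = fun lam : ℝ => mF L b c ((x, lam • v) : Vec n × Vec n) from rfl] at this
  rw [← this, hder]

lemma swap_mF (hA : IsOpen A) (hL : ContDiffOn ℝ (⊤ : ℕ∞) L A) {p : Vec n × Vec n} (hp : p ∈ A)
    (a w c : Vec n) :
    fderiv ℝ (mF L a c) p ((0 : Vec n), w) = fderiv ℝ (mF L w c) p ((0 : Vec n), a) := by
  have hf : ContDiffAt ℝ (⊤ : ℕ∞) (ellF L c) p :=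
    (contDiffOn_ellF hA hL c).contDiffAt (hA.mem_nhds hp)
  have hsymm := hf.isSymmSndFDerivAt (by simp only [minSmoothness_of_isRCLikeNormedField]; exact WithTop.coe_le_coe.2 le_top)
  have hdf : DifferentiableAt ℝ (fderiv ℝ (ellF L c)) p :=
    (hf.fderiv_right (m := (⊤ : ℕ∞)) ((by simp))).differentiableAt (by simp)
  have h1 : ∀ u₁ : Vec n × Vec n, fderiv ℝ (fun q => fderiv ℝ (ellF L c) q u₁) p
      = (fderiv ℝ (fderiv ℝ (ellF L c)) p).flip u₁ := by
    intro u₁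
    rw [fderiv_clm_apply hdf (differentiableAt_const u₁)]
    simp
  have e1 : fderiv ℝ (mF L a c) p
      = (fderiv ℝ (fderiv ℝ (ellF L c)) p).flip ((0 : Vec n), a) := h1 _
  have e2 : fderiv ℝ (mF L w c) p
      = (fderiv ℝ (fderiv ℝ (ellF L c)) p).flip ((0 : Vec n), w) := h1 _
  rw [e1, e2]
  simp only [ContinuousLinearMap.flip_apply]
  exact hsymm _ _

lemma cartan_v_snd (hA : IsOpen A) (hL : ContDiffOn ℝ (⊤ : ℕ∞) L A)
    (hconic : ∀ p ∈ A, ∀ lam : ℝ, 0 < lam → (p.1, lam • p.2) ∈ A)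
    (hhom : ∀ p ∈ A, ∀ lam : ℝ, 0 < lam → L (p.1, lam • p.2) = lam ^ 2 * L p)
    {x v : Vec n} (hp : (x, v) ∈ A) (w b : Vec n) :
    CartanF L x v w v b = 0 := by
  rw [CartanF_eq_D3 hA hL hp, swap_mF hA hL hp v w b,
    euler_mF hA hL hconic hhom hp w b, mul_zero]

end FLCHelp
namespace FLCHelp

variable {n : ℕ} {A : Set (Vec n × Vec n)} {L : Vec n × Vec n → ℝ}

lemma fderiv_gF_partial (hA : IsOpen A) (hL : ContDiffOn ℝ (⊤ : ℕ∞) L A) {x₀ v : Vec n}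
    (hp : ((x₀, v) : Vec n × Vec n) ∈ A) (a b u : Vec n) :
    fderiv ℝ (fun x => gF L x v a b) x₀ u
      = (1 / 2) * fderiv ℝ (mF L a b) (x₀, v) (u, 0) := by
  have hF : HasFDerivAt (fun x : Vec n => ((x, v) : Vec n × Vec n))
      ((ContinuousLinearMap.id ℝ (Vec n)).prod 0) x₀ :=
    (hasFDerivAt_id x₀).prodMk (hasFDerivAt_const v x₀)
  have hdm : DifferentiableAt ℝ (mF L a b) (x₀, v) :=
    diffAt_of_cdOn hA (contDiffOn_mF hA hL a b) hp
  have hmem : ∀ᶠ x : Vec n in 𝓝 x₀, ((x, v) : Vec n × Vec n) ∈ A := by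
    have hc : ContinuousAt (fun x : Vec n => ((x, v) : Vec n × Vec n)) x₀ := by fun_prop
    exact hc.preimage_mem_nhds (hA.mem_nhds hp)
  have heq : (fun x => gF L x v a b) =ᶠ[𝓝 x₀] fun x => (1 / 2) * mF L a b (x, v) := by
    filter_upwards [hmem] with x hx
    exact gF_eq_mF hA hL hx a b
  rw [heq.fderiv_eq (𝕜 := ℝ)]
  have hcomp : HasFDerivAt (fun x : Vec n => mF L a b (x, v))
      ((fderiv ℝ (mF L a b) (x₀, v)).comp
        ((ContinuousLinearMap.id ℝ (Vec n)).prod 0)) x₀ := by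
    have := hdm.hasFDerivAt.comp x₀ hF; exact this
  rw [fderiv_const_mul hcomp.differentiableAt, hcomp.fderiv]
  simp

lemma fderiv_gF_total (hA : IsOpen A) (hL : ContDiffOn ℝ (⊤ : ℕ∞) L A)
    {Ω : Set (Vec n)} (hΩ : IsOpen Ω) {V : Vec n → Vec n}
    (hVs : ContDiffOn ℝ (⊤ : ℕ∞) V Ω) {x₀ : Vec n} (hx₀ : x₀ ∈ Ω)
    (hp : ((x₀, V x₀) : Vec n × Vec n) ∈ A) (a b u : Vec n) :
    fderiv ℝ (fun x => gF L x (V x) a b) x₀ u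
      = (1 / 2) * fderiv ℝ (mF L a b) (x₀, V x₀) (u, fderiv ℝ V x₀ u) := by
  have hVd : DifferentiableAt ℝ V x₀ :=
    (hVs.contDiffAt (hΩ.mem_nhds hx₀)).differentiableAt (by simp)
  have hF : HasFDerivAt (fun x : Vec n => ((x, V x) : Vec n × Vec n))
      ((ContinuousLinearMap.id ℝ (Vec n)).prod (fderiv ℝ V x₀)) x₀ :=
    (hasFDerivAt_id x₀).prodMk hVd.hasFDerivAt
  have hdm : DifferentiableAt ℝ (mF L a b) (x₀, V x₀) :=
    diffAt_of_cdOn hA (contDiffOn_mF hA hL a b) hp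
  have hmem : ∀ᶠ x : Vec n in 𝓝 x₀, ((x, V x) : Vec n × Vec n) ∈ A :=
    (continuousAt_id.prodMk hVd.continuousAt).preimage_mem_nhds (hA.mem_nhds hp)
  have heq : (fun x => gF L x (V x) a b) =ᶠ[𝓝 x₀] fun x => (1 / 2) * mF L a b (x, V x) := by
    filter_upwards [hmem] with x hx
    exact gF_eq_mF hA hL hx a b
  rw [heq.fderiv_eq (𝕜 := ℝ)]
  have hcomp : HasFDerivAt (fun x : Vec n => mF L a b (x, V x))
      ((fderiv ℝ (mF L a b) (x₀, V x₀)).comp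
        ((ContinuousLinearMap.id ℝ (Vec n)).prod (fderiv ℝ V x₀))) x₀ :=
    by have := hdm.hasFDerivAt.comp x₀ hF; exact this
  rw [fderiv_const_mul hcomp.differentiableAt, hcomp.fderiv]
  simp

end FLCHelp
/-- The formal Levi-Civita identity for the quadratic part of `Γ`:
`g_{(x₀,v)}(Γ(x₀)(v,v), z) = ∂ˣ_v g(v,z) − ½ ∂ˣ_z g(v,v)` with `v := V(x₀)`,
the fiber variable being held fixed in the base derivatives. -/
theorem formal_levi_civita {n : ℕ} (hn : 1 ≤ n)
    (Ω : Set (Vec n)) (A : Set (Vec n × Vec n)) (L : Vec n × Vec n → ℝ)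
    (hL : IsPseudoFinsler Ω A L) (V : Vec n → Vec n) (hV : LAdmissible A Ω V)
    (Γ : Vec n → Bil n) (hTF : TorsionFree Ω Γ) (hAC : AlmostGCompatible L Ω Γ V)
    (x₀ : Vec n) (hx₀ : x₀ ∈ Ω) :
    ∀ z : Vec n,
      gF L x₀ (V x₀) (Γ x₀ (V x₀) (V x₀)) z =
        fderiv ℝ (fun x => gF L x (V x₀) (V x₀) z) x₀ (V x₀)
          - (1 / 2) * fderiv ℝ (fun x => gF L x (V x₀) (V x₀) (V x₀)) x₀ z := by
  intro z
  obtain ⟨hVs, hVA⟩ := hV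
  set v := V x₀ with hv
  have hp : ((x₀, v) : Vec n × Vec n) ∈ A := hVA x₀ hx₀
  have hA := hL.isOpen_dom
  have hLs := hL.smooth
  have hCz : ∀ w b : Vec n, CartanF L x₀ v w v b = 0 := fun w b =>
    FLCHelp.cartan_v_snd hA hLs hL.conic hL.homogeneous hp w b
  -- key: total derivative equals partial derivative (Cartan correction vanishes)
  have key : ∀ b u : Vec n,
      fderiv ℝ (fun x => gF L x (V x) v b) x₀ u
        = fderiv ℝ (fun x => gF L x v v b) x₀ u := by
    intro b u
    rw [FLCHelp.fderiv_gF_total hA hLs hL.isOpen_base hVs hx₀ hp v b u,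
      FLCHelp.fderiv_gF_partial hA hLs hp v b u]
    have hsplit : ((u, fderiv ℝ V x₀ u) : Vec n × Vec n)
        = (u, 0) + (((0 : Vec n), fderiv ℝ V x₀ u) : Vec n × Vec n) := by
      simp
    rw [hsplit, (fderiv ℝ (FLCHelp.mF L v b) (x₀, v)).map_add]
    have h0 : fderiv ℝ (FLCHelp.mF L v b) (x₀, v) ((0 : Vec n), fderiv ℝ V x₀ u) = 0 := by
      have h1 := FLCHelp.CartanF_eq_D3 hA hLs hp (fderiv ℝ V x₀ u) v b
      have h2 := hCz (fderiv ℝ V x₀ u) b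
      rw [h2] at h1
      linarith
    rw [h0, add_zero]
  -- the two compatibility equations with constant fields
  have E1 := hAC (fun _ => v) (fun _ => v) (fun _ => z)
    contDiffOn_const contDiffOn_const contDiffOn_const x₀ hx₀
  have E2 := hAC (fun _ => z) (fun _ => v) (fun _ => v)
    contDiffOn_const contDiffOn_const contDiffOn_const x₀ hx₀
  simp only [nablaVF, fderiv_fun_const, Pi.zero_apply, ContinuousLinearMap.zero_apply,
    zero_add] at E1 E2
  rw [hCz] at E1 E2
  rw [mul_zero, add_zero] at E1 E2
  rw [← hv] at E1 E2
  rw [← key z v, ← key v z, E1, E2]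
  have hTF' : Γ x₀ z v = Γ x₀ v z := hTF x₀ hx₀ z v
  have hsym : gF L x₀ v (Γ x₀ v z) v = gF L x₀ v v (Γ x₀ v z) := by
    have := hL.g_symm (x₀, v) hp (Γ x₀ v z) v
    simpa using this
  rw [hTF', hsym]
  ring
end
end
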